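/- arXiv:2102.08203 — 9 statements merged into one kernel-verified Lean document; each statement's English description precedes it below -/
import Mathlib

section
/- Let α ∈ [0, π], λ ≥ 0 and P₀ ∈ ℝ. Suppose g : [0,1] → ℝ is continuous on [0,1] and differentiable on (0,1), satisfies g(0) = 0, g(1) = cos α, and for every r ∈ (0,1) the derivative of r ↦ r·g(r) equals r·(−P₀ − λ r²/2). Then P₀ = −2 cos α − λ/4 and g(r) = r cos α + (λ/8)·r·(1 − r²) for all r ∈ [0,1]. -/
open Real Set

/-- First integral of the rotating-meniscus Young–Laplace equation in zero gravity:
if `g = sin θ` satisfies `g 0 = 0`, `g 1 = cos α`, and `(r * g r)' = r * (-P₀ - λ r²/2)`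
on `(0,1)`, then `P₀ = -2 cos α - λ/4` and `g r = r cos α + (λ/8) r (1 - r²)`. -/
theorem stmt_0 (α lam P₀ : ℝ) (hα : α ∈ Icc 0 π) (hlam : 0 ≤ lam)
    (g : ℝ → ℝ)
    (hgc : ContinuousOn g (Icc 0 1))
    (hgd : DifferentiableOn ℝ g (Ioo 0 1))
    (hg0 : g 0 = 0) (hg1 : g 1 = Real.cos α)
    (hode : ∀ r ∈ Ioo (0:ℝ) 1,
      HasDerivAt (fun x => x * g x) (r * (-P₀ - lam * r ^ 2 / 2)) r) :
    P₀ = -2 * Real.cos α - lam / 4 ∧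
    ∀ r ∈ Icc (0:ℝ) 1, g r = r * Real.cos α + lam / 8 * r * (1 - r ^ 2) := by
  set F : ℝ → ℝ := fun x => x * g x + P₀ * x ^ 2 / 2 + lam * x ^ 4 / 8 with hF
  -- F is continuous on [0,1]
  have hFc : ContinuousOn F (Icc 0 1) := by
    apply ContinuousOn.add
    apply ContinuousOn.add
    · exact (continuousOn_id.mul hgc)
    · fun_prop
    · fun_prop
  -- derivative of the polynomial part
  have hpoly : ∀ x : ℝ, HasDerivAt (fun y => P₀ * y ^ 2 / 2 + lam * y ^ 4 / 8)
      (P₀ * x + lam * x ^ 3 / 2) x := by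
    intro x
    have h1 : HasDerivAt (fun y : ℝ => P₀ * y ^ 2 / 2) (P₀ * x) x := by
      have := ((hasDerivAt_pow 2 x).const_mul P₀).div_const 2
      simpa using this.congr_deriv (by ring)
    have h2 : HasDerivAt (fun y : ℝ => lam * y ^ 4 / 8) (lam * x ^ 3 / 2) x := by
      have := ((hasDerivAt_pow 4 x).const_mul lam).div_const 8
      simpa using this.congr_deriv (by ring)
    exact h1.add h2
  -- F' = 0 on [0,1)
  have hFd : ∀ x ∈ Ico (0:ℝ) 1, HasDerivWithinAt F 0 (Ici x) x := by
    intro x hx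
    rcases eq_or_lt_of_le hx.1 with h0 | h0
    · -- x = 0 : use the slope definition
      subst h0
      have hxg : HasDerivWithinAt (fun y => y * g y) 0 (Ici 0) 0 := by
        rw [hasDerivWithinAt_iff_tendsto_slope]
        have hIci : (Ici (0:ℝ)) \ {0} = Ioi 0 := by
          ext y; simp [mem_diff, lt_iff_le_and_ne, eq_comm, and_comm]
        rw [hIci]
        have heq : ∀ᶠ y in nhdsWithin (0:ℝ) (Ioi 0), slope (fun y => y * g y) 0 y = g y := by
          filter_upwards [self_mem_nhdsWithin] with y hy
          have hy0 : y ≠ 0 := ne_of_gt hy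
          simp only [slope_def_field, sub_zero, zero_mul]
          field_simp
        rw [Filter.tendsto_congr' heq]
        have h1 : Filter.Tendsto g (nhdsWithin 0 (Icc 0 1)) (nhds 0) := by
          have := hgc 0 (by constructor <;> norm_num)
          simpa [hg0] using this.tendsto
        have h2 : nhdsWithin (0:ℝ) (Ioi 0) = nhdsWithin 0 (Ioo 0 1) :=
          (nhdsWithin_Ioo_eq_nhdsGT (by norm_num)).symm
        rw [h2]
        exact h1.mono_left (nhdsWithin_mono 0 Ioo_subset_Icc_self)
      have hp := (hpoly 0).hasDerivWithinAt (s := Ici (0:ℝ))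
      have := hxg.add hp
      simpa [hF, ← add_assoc, Pi.add_def] using this
    · have hxd := hode x ⟨h0, hx.2⟩
      have := hxd.add (hpoly x)
      have h0' : x * (-P₀ - lam * x ^ 2 / 2) + (P₀ * x + lam * x ^ 3 / 2) = 0 := by ring
      rw [h0'] at this
      have : HasDerivAt F 0 x := by simpa [hF, ← add_assoc, Pi.add_def] using this
      exact this.hasDerivWithinAt
  have hconst := constant_of_has_deriv_right_zero hFc hFd
  have hF0 : F 0 = 0 := by simp [hF, hg0]
  have hFzero : ∀ x ∈ Icc (0:ℝ) 1, F x = 0 := by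
    intro x hx; rw [hconst x hx, hF0]
  have hF1 : F 1 = 0 := hFzero 1 (by constructor <;> norm_num)
  have hP : P₀ = -2 * Real.cos α - lam / 4 := by
    simp only [hF, hg1, one_pow, one_mul, mul_one] at hF1
    linarith
  refine ⟨hP, fun r hr => ?_⟩
  rcases eq_or_lt_of_le hr.1 with h0 | h0
  · subst h0; simp [hg0]
  · have := hFzero r hr
    simp only [hF] at this
    have hr0 : r ≠ 0 := ne_of_gt h0
    field_simp
    subst hP
    nlinarith [this, sq_nonneg r]
end

section
/- Let α ∈ [0, π], set c = cos((π − α)/3), r_c = 1/(2c) and λ_c = 32 c³ (equivalently λ_c = 4/r_c³, so that r_c³ λ_c = 4). Then r_c ∈ [1/2, 1], and the profile s(r) = r cos α + (λ_c/8)·r·(1 − r²) satisfies s(r_c) = 1 and s'(r_c) = cos α + (λ_c/8)(1 − 3 r_c²) = 0. -/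
open Real Set

/-- Critical radius and critical rotational Bond number for contact angle `α`:
with `c = cos((π - α)/3)`, `r_c = 1/(2c)`, `λ_c = 32 c³` one has `r_c ∈ [1/2, 1]`,
the profile `s r = r cos α + (λ_c/8) r (1 - r²)` satisfies `s r_c = 1` and
`s' r_c = cos α + (λ_c/8)(1 - 3 r_c²) = 0`. -/
theorem stmt_1 (α : ℝ) (hα : α ∈ Icc 0 π) :
    let c := Real.cos ((π - α) / 3)
    let rc := 1 / (2 * c)
    let lamc := 32 * c ^ 3
    let s : ℝ → ℝ := fun r => r * Real.cos α + lamc / 8 * r * (1 - r ^ 2)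
    rc ∈ Icc (1/2 : ℝ) 1 ∧
    s rc = 1 ∧
    HasDerivAt s (Real.cos α + lamc / 8 * (1 - 3 * rc ^ 2)) rc ∧
    Real.cos α + lamc / 8 * (1 - 3 * rc ^ 2) = 0 := by
  intro c rc lamc s
  obtain ⟨hα0, hαπ⟩ := hα
  have hpi := Real.pi_pos
  have hθ0 : (0:ℝ) ≤ (π - α) / 3 := by linarith
  have hθπ : (π - α) / 3 ≤ π / 3 := by linarith
  have hc1 : (1:ℝ)/2 ≤ c := by
    have h := Real.cos_le_cos_of_nonneg_of_le_pi hθ0 (by linarith) hθπ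
    rwa [Real.cos_pi_div_three] at h
  have hc2 : c ≤ 1 := Real.cos_le_one _
  have hcpos : 0 < c := by linarith
  have hcne : c ≠ 0 := ne_of_gt hcpos
  have hcos : Real.cos α = 3 * c - 4 * c ^ 3 := by
    have hαeq : α = π - 3 * ((π - α) / 3) := by ring
    rw [hαeq, Real.cos_pi_sub, Real.cos_three_mul]
    show -(4 * c ^ 3 - 3 * c) = 3 * c - 4 * c ^ 3
    ring
  have hrc : rc ∈ Icc (1/2 : ℝ) 1 := by
    constructor
    · rw [div_le_div_iff₀ (by norm_num) (by positivity)]; linarith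
    · rw [div_le_one (by positivity)]; linarith
  have hderiv0 : Real.cos α + lamc / 8 * (1 - 3 * rc ^ 2) = 0 := by
    show Real.cos α + 32 * c ^ 3 / 8 * (1 - 3 * (1 / (2 * c)) ^ 2) = 0
    rw [hcos]
    field_simp
    ring
  refine ⟨hrc, ?_, ?_, hderiv0⟩
  · show rc * Real.cos α + 32 * c ^ 3 / 8 * rc * (1 - rc ^ 2) = 1
    show (1 / (2 * c)) * Real.cos α + 32 * c ^ 3 / 8 * (1 / (2 * c)) * (1 - (1 / (2 * c)) ^ 2) = 1
    rw [hcos]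
    field_simp
    ring
  · have h1 : HasDerivAt (fun r : ℝ => r * Real.cos α) (Real.cos α) rc := by
      simpa using (hasDerivAt_id rc).mul_const (Real.cos α)
    have h2 : HasDerivAt (fun r : ℝ => (1:ℝ) - r ^ 2) (-(2 * rc)) rc := by
      simpa using (hasDerivAt_pow 2 rc).const_sub 1
    have h3 : HasDerivAt (fun r : ℝ => lamc / 8 * r) (lamc / 8) rc := by
      simpa using (hasDerivAt_id rc).const_mul (lamc / 8)
    have h4 := (h1.add (h3.mul h2))
    refine h4.congr_deriv ?_
    ring
end

section
/- For every α ∈ [0, π] and every x ∈ ℝ, setting c = cos((π − α)/3) and r_w = (2/√3)·c, the following identity holds: (12√3/8)·( r_w x − (r_w x)³ ) = x cos α + (32 c³/8)·( x − x³ ). In particular the critical meniscus shape for contact angle π/2 (with λ_c = 12√3) rescaled by r = r_w x reproduces the critical shape for contact angle α (with λ_c(α) = 32 c³). -/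
open Real Set

/-- The master-shape rescaling identity: for every contact angle `α ∈ [0, π]` and
every `x`, with `c = cos((π - α)/3)` and `r_w = (2/√3) c`,
`(12√3/8)(r_w x - (r_w x)³) = x cos α + (32 c³/8)(x - x³)`. -/
theorem stmt_3 (α : ℝ) (hα : α ∈ Icc 0 π) (x : ℝ) :
    let c := Real.cos ((π - α) / 3)
    let rw := 2 / Real.sqrt 3 * c
    12 * Real.sqrt 3 / 8 * (rw * x - (rw * x) ^ 3)
      = x * Real.cos α + 32 * c ^ 3 / 8 * (x - x ^ 3) := by
  intro c rw
  have h3 : (3 : ℝ) * ((π - α) / 3) = π - α := by ring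
  have hcos : Real.cos α = 3 * c - 4 * c ^ 3 := by
    have := Real.cos_three_mul ((π - α) / 3)
    rw [h3, Real.cos_pi_sub] at this
    simp only [c]
    linarith
  have hs : Real.sqrt 3 ^ 2 = 3 := Real.sq_sqrt (by norm_num)
  have hs0 : Real.sqrt 3 ≠ 0 := by positivity
  simp only [rw, hcos]
  field_simp
  linear_combination (32 * c ^ 3 * x ^ 3) * hs
end

section
/- Define H(λ) = ∫₀¹ P(r,λ)/√(1 − P(r,λ)²) dr, where P(r,λ) = (λ/8)(r − r³), for 0 ≤ λ < 12√3. Then there exists a real constant H₀ such that H(λ) + (1/3)·ln(12√3 − λ) tends to H₀ as λ → 12√3 from below. In particular H(λ) → +∞ as λ → 12√3⁻. -/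
open Real Set Filter

/-- Axial length of the rotating meniscus with contact angle `π/2`. -/
noncomputable def meniscusLength (lam : ℝ) : ℝ :=
  ∫ r in (0:ℝ)..1,
    (lam / 8 * (r - r ^ 3)) / Real.sqrt (1 - (lam / 8 * (r - r ^ 3)) ^ 2)

noncomputable def Pfun (l r : ℝ) : ℝ := l / 8 * (r - r ^ 3)
noncomputable def ffun (l r : ℝ) : ℝ := Pfun l r / Real.sqrt (1 - Pfun l r ^ 2)
noncomputable def mfun (l : ℝ) : ℝ := (12 * Real.sqrt 3 - l) / (12 * Real.sqrt 3)
noncomputable def gfun (l r : ℝ) : ℝ := 1 / Real.sqrt (2 * mfun l + (3 * r - Real.sqrt 3) ^ 2)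

lemma sqrt3_pos : (0:ℝ) < Real.sqrt 3 := Real.sqrt_pos.2 (by norm_num)
lemma sqrt3_sq : Real.sqrt 3 ^ 2 = 3 := Real.sq_sqrt (by norm_num)
lemma sqrt3_lo : (1.7:ℝ) ≤ Real.sqrt 3 := by
  nlinarith [sqrt3_sq, Real.sqrt_nonneg 3]
lemma sqrt3_hi : Real.sqrt 3 ≤ (1.8:ℝ) := by
  nlinarith [sqrt3_sq, Real.sqrt_nonneg 3]

lemma key_identity (l r : ℝ) :
    1 - Pfun l r = mfun l + l / 8 * (r - Real.sqrt 3 / 3) ^ 2 * (r + 2 * Real.sqrt 3 / 3) := by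
  have hs := sqrt3_sq
  have hs0 := sqrt3_pos.ne'
  unfold Pfun mfun
  field_simp
  linear_combination (108*l*r*Real.sqrt 3 - 24*l*(Real.sqrt 3^2 + 3)) * hs

lemma mfun_pos {l : ℝ} (hl : l < 12 * Real.sqrt 3) : 0 < mfun l :=
  div_pos (by linarith) (by positivity)

lemma P_nonneg {l r : ℝ} (hl : 0 ≤ l) (hr : r ∈ Icc (0:ℝ) 1) : 0 ≤ Pfun l r := by
  obtain ⟨h0, h1⟩ := hr
  have : 0 ≤ r - r ^ 3 := by nlinarith [sq_nonneg r, mul_nonneg h0 (sq_nonneg r)]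
  unfold Pfun; positivity

lemma one_sub_P_ge {l r : ℝ} (hl : 0 ≤ l) (hr : r ∈ Icc (0:ℝ) 1) :
    mfun l ≤ 1 - Pfun l r := by
  rw [key_identity]
  have h1 : 0 ≤ l / 8 * (r - Real.sqrt 3 / 3) ^ 2 * (r + 2 * Real.sqrt 3 / 3) := by
    have := hr.1
    have := sqrt3_pos
    positivity
  linarith

lemma P_lt_one {l r : ℝ} (hl0 : 0 ≤ l) (hl : l < 12 * Real.sqrt 3) (hr : r ∈ Icc (0:ℝ) 1) :
    Pfun l r < 1 := by
  have h1 := one_sub_P_ge hl0 hr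
  have h2 := mfun_pos hl
  linarith

lemma two_m_eq (l : ℝ) : 2 * mfun l = (12 * Real.sqrt 3 - l) / (6 * Real.sqrt 3) := by
  unfold mfun
  have := sqrt3_pos.ne'
  field_simp
  ring

lemma BA_identity (l r : ℝ) :
    (2 * mfun l + (3 * r - Real.sqrt 3) ^ 2) - 2 * (1 - Pfun l r) =
      (3 * r - Real.sqrt 3) ^ 2 *
        ((12 * Real.sqrt 3 - l) * (r + 2 * Real.sqrt 3 / 3)
          - 4 * Real.sqrt 3 * (3 * r - Real.sqrt 3)) / 36 := by
  rw [key_identity]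
  linear_combination (-3 * (r - Real.sqrt 3 / 3) ^ 2) * sqrt3_sq

lemma T1_bound {Q : ℝ} (hQpos : 0 < Q) (hQ1 : Q ≤ 1) :
    |(1 - Q) / (Real.sqrt Q * Real.sqrt (2 - Q)) - 1 / Real.sqrt (2 * Q)| ≤ 1 := by
  set s2 := Real.sqrt 2 with hs2def
  have hs22 : s2 ^ 2 = 2 := Real.sq_sqrt (by norm_num)
  have hs2pos : (0:ℝ) < s2 := Real.sqrt_pos.2 (by norm_num)
  have hs2lo : (1.4:ℝ) ≤ s2 := by nlinarith [Real.sqrt_nonneg 2]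
  set sQ := Real.sqrt Q with hsQdef
  set sQ2 := Real.sqrt (2 - Q) with hsQ2def
  have hsQsq : sQ ^ 2 = Q := Real.sq_sqrt hQpos.le
  have hsQ2sq : sQ2 ^ 2 = 2 - Q := Real.sq_sqrt (by linarith)
  have hsQpos : 0 < sQ := Real.sqrt_pos.2 hQpos
  have hsQ2_one : (1:ℝ) ≤ sQ2 := by
    apply Real.le_sqrt_of_sq_le; nlinarith
  have hsQ2pos : 0 < sQ2 := by linarith
  have hsQ2_le : sQ2 ≤ s2 := Real.sqrt_le_sqrt (by linarith)
  have hsQle : sQ ≤ sQ2 := Real.sqrt_le_sqrt (by linarith)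
  have h2Q : Real.sqrt (2 * Q) = s2 * sQ :=
    Real.sqrt_mul (by norm_num : (0:ℝ) ≤ 2) Q
  have hexp : s2 * (1 - Q) = s2 - s2 * Q := by ring
  have h14 : 1.4 * Q ≤ s2 * Q := mul_le_mul_of_nonneg_right hs2lo hQpos.le
  have h1 : s2 - Q ≤ sQ2 := by
    apply Real.le_sqrt_of_sq_le
    nlinarith [mul_le_mul_of_nonneg_left hQ1 hQpos.le]
  have hnum_lo : -(s2 * Q) ≤ s2 * (1 - Q) - sQ2 := by linarith
  have hnum_hi : s2 * (1 - Q) - sQ2 ≤ s2 * Q := by linarith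
  have hT1e : (1 - Q) / (sQ * sQ2) - 1 / Real.sqrt (2 * Q) =
      (s2 * (1 - Q) - sQ2) / (s2 * sQ * sQ2) := by
    rw [h2Q]
    field_simp
  rw [hT1e, abs_div, abs_of_pos (mul_pos (mul_pos hs2pos hsQpos) hsQ2pos)]
  rw [div_le_one (mul_pos (mul_pos hs2pos hsQpos) hsQ2pos)]
  have habs : |s2 * (1 - Q) - sQ2| ≤ s2 * Q := abs_le.2 ⟨hnum_lo, hnum_hi⟩
  have hQsq : Q = sQ * sQ := by nlinarith
  calc |s2 * (1 - Q) - sQ2| ≤ s2 * Q := habs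
    _ = s2 * sQ * sQ := by rw [hQsq]; ring
    _ ≤ s2 * sQ * sQ2 := mul_le_mul_of_nonneg_left hsQle (by positivity)

lemma T2_bound {m Q t e : ℝ} (hm : 0 < m) (hQm : m ≤ Q) (hQt : m + t ^ 2 / 4 ≤ Q)
    (he0 : 0 ≤ e) (he : e / 4 ≤ Real.sqrt (2 * m))
    (hBA : |(2 * m + t ^ 2) - 2 * Q| ≤ t ^ 2 * e / 12 + Real.sqrt 3 * (t ^ 2 * |t|) / 9) :
    |1 / Real.sqrt (2 * Q) - 1 / Real.sqrt (2 * m + t ^ 2)| ≤ 5 / 6 := by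
  have h3hi : Real.sqrt 3 ≤ 1.8 := sqrt3_hi
  have h3nn : (0:ℝ) ≤ Real.sqrt 3 := Real.sqrt_nonneg 3
  have hQpos : 0 < Q := lt_of_lt_of_le hm hQm
  rcases eq_or_ne t 0 with ht | ht
  · subst ht
    have hBA' : |(2 * m + 0 ^ 2) - 2 * Q| ≤ 0 := by simpa using hBA
    have : 2 * m + 0 ^ 2 = 2 * Q := by
      have := abs_nonneg ((2 * m + 0 ^ 2) - 2 * Q)
      have h0 : |(2 * m + 0 ^ 2) - 2 * Q| = 0 := le_antisymm hBA' this
      have := abs_eq_zero.1 h0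
      linarith
    rw [this, sub_self, abs_zero]
    norm_num
  · have ht2 : 0 < t ^ 2 := by positivity
    have htabs : 0 < |t| := abs_pos.2 ht
    set A := 2 * Q with hAdef
    set B := 2 * m + t ^ 2 with hBdef
    have hApos : 0 < A := by positivity
    have hBpos : 0 < B := by positivity
    set sA := Real.sqrt A with hsAdef
    set sB := Real.sqrt B with hsBdef
    have hsA2 : sA ^ 2 = A := Real.sq_sqrt hApos.le
    have hsB2 : sB ^ 2 = B := Real.sq_sqrt hBpos.le
    have hsApos : 0 < sA := Real.sqrt_pos.2 hApos
    have hsBpos : 0 < sB := Real.sqrt_pos.2 hBpos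
    have hsmpos : 0 < Real.sqrt (2 * m) := Real.sqrt_pos.2 (by linarith)
    have hsA_m : Real.sqrt (2 * m) ≤ sA := Real.sqrt_le_sqrt (by linarith)
    have hsA_t : |t| / 2 ≤ sA := by
      apply Real.le_sqrt_of_sq_le
      rw [div_pow, sq_abs]
      nlinarith
    have hsB_t : |t| ≤ sB := by
      apply Real.le_sqrt_of_sq_le
      rw [sq_abs]
      nlinarith
    -- denominator and its lower bounds
    have h2 : t ^ 2 ≤ sB * (sA + sB) := by nlinarith
    have hd1 : Real.sqrt (2 * m) * t ^ 2 ≤ sA * (sB * (sA + sB)) := by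
      calc Real.sqrt (2 * m) * t ^ 2 ≤ sA * t ^ 2 :=
            mul_le_mul_of_nonneg_right hsA_m (le_of_lt ht2)
        _ ≤ sA * (sB * (sA + sB)) := mul_le_mul_of_nonneg_left h2 hsApos.le
    have hd2 : |t| / 2 * t ^ 2 ≤ sA * (sB * (sA + sB)) := by
      calc |t| / 2 * t ^ 2 ≤ sA * t ^ 2 :=
            mul_le_mul_of_nonneg_right hsA_t (le_of_lt ht2)
        _ ≤ sA * (sB * (sA + sB)) := mul_le_mul_of_nonneg_left h2 hsApos.le
    have hdenpos : 0 < sA * (sB * (sA + sB)) := by positivity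
    -- the algebraic identity
    have h1 : (sB - sA) * (sB + sA) = B - A := by linear_combination hsB2 - hsA2
    have e1 : 1 / sA - 1 / sB = (B - A) / (sA * (sB * (sA + sB))) := by
      rw [div_sub_div _ _ hsApos.ne' hsBpos.ne', div_eq_div_iff (by positivity) (by positivity)]
      linear_combination (sA * sB) * h1
    rw [e1, abs_div, abs_of_pos hdenpos]
    have hBA' : |B - A| ≤ t ^ 2 * e / 12 + Real.sqrt 3 * (t ^ 2 * |t|) / 9 := hBA
    calc |B - A| / (sA * (sB * (sA + sB)))
        ≤ (t ^ 2 * e / 12 + Real.sqrt 3 * (t ^ 2 * |t|) / 9) / (sA * (sB * (sA + sB))) := by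
          gcongr
      _ = (t ^ 2 * e / 12) / (sA * (sB * (sA + sB)))
          + (Real.sqrt 3 * (t ^ 2 * |t|) / 9) / (sA * (sB * (sA + sB))) := by
          rw [add_div]
      _ ≤ (t ^ 2 * e / 12) / (Real.sqrt (2 * m) * t ^ 2)
          + (Real.sqrt 3 * (t ^ 2 * |t|) / 9) / (|t| / 2 * t ^ 2) := by
          gcongr <;> positivity
      _ = e / (12 * Real.sqrt (2 * m)) + 2 * Real.sqrt 3 / 9 := by
          field_simp
      _ ≤ 5 / 6 := by
          have h13 : e / (12 * Real.sqrt (2 * m)) ≤ 1 / 3 := by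
            rw [div_le_div_iff₀ (by positivity) (by norm_num)]
            linarith
          linarith

set_option maxHeartbeats 800000 in
lemma unif_bound {l r : ℝ} (hl1 : 12 * Real.sqrt 3 - 1 ≤ l) (hl2 : l < 12 * Real.sqrt 3)
    (hr : r ∈ Icc (0:ℝ) 1) : |ffun l r - gfun l r| ≤ 2 := by
  have h3lo := sqrt3_lo
  have h3hi := sqrt3_hi
  have hl0 : (0:ℝ) ≤ l := by linarith
  have hm : 0 < mfun l := mfun_pos hl2
  set m := mfun l with hmdef
  set t := 3 * r - Real.sqrt 3 with htdef
  set Q := 1 - Pfun l r with hQdef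
  set e := 12 * Real.sqrt 3 - l with hedef
  have he0 : 0 ≤ e := by rw [hedef]; linarith
  have he1 : e ≤ 1 := by rw [hedef]; linarith
  have hepos : 0 < e := by rw [hedef]; linarith
  have hrt : r - Real.sqrt 3 / 3 = t / 3 := by rw [htdef]; ring
  have hQeq : Q = m + l / 8 * (t / 3) ^ 2 * (r + 2 * Real.sqrt 3 / 3) := by
    rw [hQdef, key_identity, hrt]
  have hQm : m ≤ Q := one_sub_P_ge hl0 hr
  have hPn : 0 ≤ Pfun l r := P_nonneg hl0 hr
  have hQ1 : Q ≤ 1 := by rw [hQdef]; linarith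
  have hQpos : 0 < Q := lt_of_lt_of_le hm hQm
  have hQt : m + t ^ 2 / 4 ≤ Q := by
    rw [hQeq]
    have h18 : 18 ≤ l * (r + 2 * Real.sqrt 3 / 3) := by
      nlinarith [mul_nonneg (by linarith : (0:ℝ) ≤ l - 19)
        (by linarith [hr.1] : (0:ℝ) ≤ r + 2 * Real.sqrt 3 / 3 - 1)]
    nlinarith [sq_nonneg t,
      mul_nonneg (sq_nonneg t) (by linarith : (0:ℝ) ≤ l * (r + 2 * Real.sqrt 3 / 3) - 18)]
  -- √(2m) ≥ e/4
  have h2m : 2 * m = e / (6 * Real.sqrt 3) := by rw [hmdef, two_m_eq, hedef]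
  have he4 : e / 4 ≤ Real.sqrt (2 * m) := by
    apply Real.le_sqrt_of_sq_le
    rw [h2m, div_pow, div_le_div_iff₀ (by norm_num) (by positivity)]
    nlinarith [mul_nonneg (mul_nonneg he0 he0) sqrt3_pos.le]
  -- |B - A| bound
  have hid : (2 * m + t ^ 2) - 2 * Q =
      t ^ 2 * (e * (r + 2 * Real.sqrt 3 / 3) - 4 * Real.sqrt 3 * t) / 36 := by
    rw [hQdef, hmdef, htdef, hedef]
    exact BA_identity l r
  have hBA : |(2 * m + t ^ 2) - 2 * Q| ≤ t ^ 2 * e / 12 + Real.sqrt 3 * (t ^ 2 * |t|) / 9 := by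
    rw [hid]
    rw [abs_div, abs_mul, abs_of_nonneg (sq_nonneg t), abs_of_pos (by norm_num : (0:ℝ) < 36)]
    have hXY : |e * (r + 2 * Real.sqrt 3 / 3) - 4 * Real.sqrt 3 * t| ≤
        3 * e + 4 * Real.sqrt 3 * |t| := by
      refine (abs_sub _ _).trans ?_
      have hX : |e * (r + 2 * Real.sqrt 3 / 3)| ≤ 3 * e := by
        rw [abs_of_nonneg (by nlinarith [hr.1] : (0:ℝ) ≤ e * (r + 2 * Real.sqrt 3 / 3))]
        nlinarith [hr.2]
      have hY : |4 * Real.sqrt 3 * t| = 4 * Real.sqrt 3 * |t| := by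
        rw [abs_mul, abs_of_nonneg (by positivity : (0:ℝ) ≤ 4 * Real.sqrt 3)]
      linarith [hX, le_of_eq hY]
    calc t ^ 2 * |e * (r + 2 * Real.sqrt 3 / 3) - 4 * Real.sqrt 3 * t| / 36
        ≤ t ^ 2 * (3 * e + 4 * Real.sqrt 3 * |t|) / 36 := by gcongr
      _ = t ^ 2 * e / 12 + Real.sqrt 3 * (t ^ 2 * |t|) / 9 := by ring
  -- assemble
  have hf : ffun l r = (1 - Q) / (Real.sqrt Q * Real.sqrt (2 - Q)) := by
    have hP2 : 1 - Pfun l r ^ 2 = Q * (2 - Q) := by rw [hQdef]; ring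
    have hPQ : Pfun l r = 1 - Q := by rw [hQdef]; ring
    unfold ffun
    rw [hP2, hPQ, Real.sqrt_mul hQpos.le]
  have hg : gfun l r = 1 / Real.sqrt (2 * m + t ^ 2) := by
    rw [hmdef, htdef]; rfl
  have hsplit : ffun l r - gfun l r =
      ((1 - Q) / (Real.sqrt Q * Real.sqrt (2 - Q)) - 1 / Real.sqrt (2 * Q))
      + (1 / Real.sqrt (2 * Q) - 1 / Real.sqrt (2 * m + t ^ 2)) := by
    rw [hf, hg]; ring
  rw [hsplit]
  calc |_ + _| ≤ |(1 - Q) / (Real.sqrt Q * Real.sqrt (2 - Q)) - 1 / Real.sqrt (2 * Q)|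
        + |1 / Real.sqrt (2 * Q) - 1 / Real.sqrt (2 * m + t ^ 2)| := abs_add_le _ _
    _ ≤ 1 + 5 / 6 := add_le_add (T1_bound hQpos hQ1) (T2_bound hm hQm hQt he0 he4 hBA)
    _ ≤ 2 := by norm_num

noncomputable def Gant (l r : ℝ) : ℝ :=
  1 / 3 * Real.arsinh ((3 * r - Real.sqrt 3) / Real.sqrt (2 * mfun l))

lemma sqrt_one_add_div {m c : ℝ} (hm : 0 < m) :
    Real.sqrt (1 + c ^ 2 / (2 * m)) =
      Real.sqrt (2 * m + c ^ 2) / Real.sqrt (2 * m) := by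
  have h1 : 1 + c ^ 2 / (2 * m) = (2 * m + c ^ 2) / (2 * m) := by field_simp
  rw [h1, Real.sqrt_div (by positivity) _]

lemma Gant_hasDeriv {l r : ℝ} (hl : l < 12 * Real.sqrt 3) :
    HasDerivAt (Gant l) (gfun l r) r := by
  have hm := mfun_pos hl
  have hsm : 0 < Real.sqrt (2 * mfun l) := Real.sqrt_pos.2 (by linarith)
  have h1 : HasDerivAt (fun r : ℝ => (3 * r - Real.sqrt 3) / Real.sqrt (2 * mfun l))
      (3 / Real.sqrt (2 * mfun l)) r := by
    have : HasDerivAt (fun r : ℝ => 3 * r - Real.sqrt 3) 3 r := by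
      simpa using ((hasDerivAt_id r).const_mul 3).sub_const (Real.sqrt 3)
    simpa using this.div_const (Real.sqrt (2 * mfun l))
  have h2 := (Real.hasDerivAt_arsinh _).comp r h1
  have h3 := h2.const_mul (1/3 : ℝ)
  refine h3.congr_deriv ?_
  symm
  unfold gfun
  rw [div_pow, Real.sq_sqrt (by linarith : (0:ℝ) ≤ 2 * mfun l), sqrt_one_add_div hm]
  have h4 : Real.sqrt (2 * mfun l + (3 * r - Real.sqrt 3) ^ 2) > 0 := by positivity
  field_simp

lemma ffun_contOn {l : ℝ} (hl0 : 0 ≤ l) (hl : l < 12 * Real.sqrt 3) :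
    ContinuousOn (ffun l) (Icc (0:ℝ) 1) := by
  have hP : Continuous (Pfun l) := by unfold Pfun; continuity
  apply ContinuousOn.div (hP.continuousOn)
  · exact (Real.continuous_sqrt.comp (by continuity)).continuousOn
  · intro r hr
    have h1 := P_nonneg hl0 hr
    have h2 := P_lt_one hl0 hl hr
    exact Real.sqrt_ne_zero'.2 (by nlinarith)

lemma gfun_cont {l : ℝ} (hl : l < 12 * Real.sqrt 3) : Continuous (gfun l) := by
  have hm := mfun_pos hl
  apply Continuous.div continuous_const (Real.continuous_sqrt.comp (by continuity))
  intro r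
  have : 0 < 2 * mfun l + (3 * r - Real.sqrt 3) ^ 2 := by positivity
  exact (Real.sqrt_pos.2 this).ne'

lemma ffun_intble {l : ℝ} (hl0 : 0 ≤ l) (hl : l < 12 * Real.sqrt 3) :
    IntervalIntegrable (ffun l) MeasureTheory.volume 0 1 := by
  apply ContinuousOn.intervalIntegrable
  rw [uIcc_of_le (by norm_num : (0:ℝ) ≤ 1)]
  exact ffun_contOn hl0 hl

lemma gfun_intble {l : ℝ} (hl : l < 12 * Real.sqrt 3) :
    IntervalIntegrable (gfun l) MeasureTheory.volume 0 1 :=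
  (gfun_cont hl).intervalIntegrable 0 1

lemma gfun_integral {l : ℝ} (hl : l < 12 * Real.sqrt 3) :
    ∫ r in (0:ℝ)..1, gfun l r = Gant l 1 - Gant l 0 :=
  intervalIntegral.integral_eq_sub_of_hasDerivAt
    (fun x _ => Gant_hasDeriv hl) (gfun_intble hl)

lemma arsinh_log {m c : ℝ} (hm : 0 < m) (hc : 0 < c) :
    Real.arsinh (c / Real.sqrt (2 * m)) =
      Real.log (c + Real.sqrt (2 * m + c ^ 2)) - Real.log (2 * m) / 2 := by
  have hsm : 0 < Real.sqrt (2 * m) := Real.sqrt_pos.2 (by linarith)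
  unfold Real.arsinh
  rw [div_pow, Real.sq_sqrt (by linarith : (0:ℝ) ≤ 2 * m), sqrt_one_add_div hm, ← add_div,
    Real.log_div (by positivity) hsm.ne', Real.log_sqrt (by linarith)]

lemma gfun_int_eq {l : ℝ} (hl : l < 12 * Real.sqrt 3) :
    ∫ r in (0:ℝ)..1, gfun l r =
      1 / 3 * (Real.log ((3 - Real.sqrt 3) + Real.sqrt (2 * mfun l + (3 - Real.sqrt 3) ^ 2))
        + Real.log (Real.sqrt 3 + Real.sqrt (2 * mfun l + Real.sqrt 3 ^ 2))
        - Real.log (2 * mfun l)) := by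
  rw [gfun_integral hl]
  unfold Gant
  have hm := mfun_pos hl
  have h30 : (0:ℝ) < 3 - Real.sqrt 3 := by linarith [sqrt3_hi]
  have hx : (3 * (1:ℝ) - Real.sqrt 3) = 3 - Real.sqrt 3 := by ring
  have hy : (3 * (0:ℝ) - Real.sqrt 3) = -(Real.sqrt 3) := by ring
  rw [hx, hy, neg_div, Real.arsinh_neg, arsinh_log hm h30, arsinh_log hm sqrt3_pos]
  ring

lemma meniscus_eq (l : ℝ) : meniscusLength l = ∫ r in (0:ℝ)..1, ffun l r := rfl

lemma decomp {l : ℝ} (hl1 : 12 * Real.sqrt 3 - 1 ≤ l) (hl2 : l < 12 * Real.sqrt 3) :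
    meniscusLength l + 1 / 3 * Real.log (12 * Real.sqrt 3 - l) =
      (∫ r in (0:ℝ)..1, (ffun l r - gfun l r)) +
      1 / 3 * (Real.log ((3 - Real.sqrt 3) + Real.sqrt (2 * mfun l + (3 - Real.sqrt 3) ^ 2))
        + Real.log (Real.sqrt 3 + Real.sqrt (2 * mfun l + Real.sqrt 3 ^ 2))
        + Real.log (6 * Real.sqrt 3)) := by
  have hl0 : (0:ℝ) ≤ l := by linarith [sqrt3_lo]
  have hfi := ffun_intble hl0 hl2
  have hgi := gfun_intble hl2
  have hsplit : meniscusLength l =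
      (∫ r in (0:ℝ)..1, (ffun l r - gfun l r)) + ∫ r in (0:ℝ)..1, gfun l r := by
    rw [meniscus_eq]
    rw [show (fun r => ffun l r) = fun r => (ffun l r - gfun l r) + gfun l r by ext r; ring]
    exact intervalIntegral.integral_add (hfi.sub hgi) hgi
  rw [hsplit, gfun_int_eq hl2]
  have hlog2m : Real.log (2 * mfun l) =
      Real.log (12 * Real.sqrt 3 - l) - Real.log (6 * Real.sqrt 3) := by
    rw [two_m_eq, Real.log_div (by linarith : 12 * Real.sqrt 3 - l ≠ 0) (by positivity)]
  rw [hlog2m]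
  ring

noncomputable def limF (r : ℝ) : ℝ := ffun (12 * Real.sqrt 3) r - gfun (12 * Real.sqrt 3) r

lemma mfun_lamc : mfun (12 * Real.sqrt 3) = 0 := by unfold mfun; simp

lemma pos_at_lamc {r : ℝ} (hr : r ∈ Ioc (0:ℝ) 1) (hne : r ≠ Real.sqrt 3 / 3) :
    0 < 1 - Pfun (12 * Real.sqrt 3) r ^ 2 := by
  have hP0 : 0 ≤ Pfun (12 * Real.sqrt 3) r :=
    P_nonneg (by positivity) (Ioc_subset_Icc_self hr)
  have h2 : 1 - Pfun (12 * Real.sqrt 3) r =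
      0 + (12 * Real.sqrt 3) / 8 * (r - Real.sqrt 3 / 3) ^ 2 * (r + 2 * Real.sqrt 3 / 3) := by
    rw [key_identity, mfun_lamc]
  have hsq : 0 < (r - Real.sqrt 3 / 3) ^ 2 :=
    lt_of_le_of_ne (sq_nonneg _) (Ne.symm (pow_ne_zero 2 (sub_ne_zero.2 hne)))
  have h3 : 0 < (12 * Real.sqrt 3) / 8 * (r - Real.sqrt 3 / 3) ^ 2 * (r + 2 * Real.sqrt 3 / 3) := by
    apply mul_pos (mul_pos (by positivity) hsq)
    linarith [sqrt3_pos, hr.1]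
  nlinarith

lemma tendsto_pointwise {r : ℝ} (hr : r ∈ Ioc (0:ℝ) 1) (hne : r ≠ Real.sqrt 3 / 3) :
    Tendsto (fun l => ffun l r - gfun l r) (nhdsWithin (12 * Real.sqrt 3) (Iio (12 * Real.sqrt 3)))
      (nhds (limF r)) := by
  have h1 : ContinuousAt (fun l => ffun l r) (12 * Real.sqrt 3) := by
    have hpos := pos_at_lamc hr hne
    unfold ffun Pfun
    apply ContinuousAt.div (by fun_prop)
    · exact (Real.continuous_sqrt.continuousAt).comp (by fun_prop)
    · apply (Real.sqrt_pos.2 ?_).ne'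
      simpa [Pfun] using hpos
  have h2 : ContinuousAt (fun l => gfun l r) (12 * Real.sqrt 3) := by
    have ht : (3 * r - Real.sqrt 3) ≠ 0 := by
      intro h
      apply hne
      field_simp
      linarith
    have hpos : 0 < 2 * mfun (12 * Real.sqrt 3) + (3 * r - Real.sqrt 3) ^ 2 := by
      rw [mfun_lamc]
      simpa using lt_of_le_of_ne (sq_nonneg _) (Ne.symm (pow_ne_zero 2 ht))
    unfold gfun mfun
    apply ContinuousAt.div continuousAt_const
    · exact (Real.continuous_sqrt.continuousAt).comp (by fun_prop)
    · apply (Real.sqrt_pos.2 ?_).ne'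
      simpa [mfun] using hpos
  exact ((h1.sub h2).tendsto).mono_left nhdsWithin_le_nhds

lemma ae_ne_r0 : ∀ᵐ (x : ℝ) ∂MeasureTheory.volume, x ≠ Real.sqrt 3 / 3 := by
  refine MeasureTheory.ae_iff.2 ?_
  simpa [Set.setOf_eq_eq_singleton] using
    MeasureTheory.measure_singleton (μ := MeasureTheory.volume) (Real.sqrt 3 / 3)

lemma uIoc01 : uIoc (0:ℝ) 1 = Ioc (0:ℝ) 1 := uIoc_of_le (by norm_num)

lemma tendsto_main_integral :
    Tendsto (fun l => ∫ r in (0:ℝ)..1, (ffun l r - gfun l r))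
      (nhdsWithin (12 * Real.sqrt 3) (Iio (12 * Real.sqrt 3)))
      (nhds (∫ r in (0:ℝ)..1, limF r)) := by
  have hmem : Ioo (12 * Real.sqrt 3 - 1) (12 * Real.sqrt 3) ∈
      nhdsWithin (12 * Real.sqrt 3) (Iio (12 * Real.sqrt 3)) :=
    Ioo_mem_nhdsLT (by linarith [sqrt3_pos])
  apply intervalIntegral.tendsto_integral_filter_of_dominated_convergence (fun _ => (2:ℝ))
  · filter_upwards [hmem] with l hl
    have hl0 : (0:ℝ) ≤ l := by have := sqrt3_lo; obtain ⟨a, b⟩ := hl; linarith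
    apply MeasureTheory.AEStronglyMeasurable.sub
    · apply ContinuousOn.aestronglyMeasurable ?_ measurableSet_uIoc
      apply (ffun_contOn hl0 hl.2).mono
      rw [uIoc01]
      exact Ioc_subset_Icc_self
    · exact ((gfun_cont hl.2).aestronglyMeasurable).restrict
  · filter_upwards [hmem] with l hl
    apply MeasureTheory.ae_of_all
    intro r hrI
    rw [Real.norm_eq_abs]
    rw [uIoc01] at hrI
    exact unif_bound hl.1.le hl.2 (Ioc_subset_Icc_self hrI)
  · exact intervalIntegrable_const
  · filter_upwards [ae_ne_r0] with r hrne hrI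
    rw [uIoc01] at hrI
    exact tendsto_pointwise hrI hrne

noncomputable def Elog (l : ℝ) : ℝ :=
  1 / 3 * (Real.log ((3 - Real.sqrt 3) + Real.sqrt (2 * mfun l + (3 - Real.sqrt 3) ^ 2))
    + Real.log (Real.sqrt 3 + Real.sqrt (2 * mfun l + Real.sqrt 3 ^ 2))
    + Real.log (6 * Real.sqrt 3))

lemma mfun_cont : Continuous mfun := by unfold mfun; fun_prop

lemma Elog_contAt : ContinuousAt Elog (12 * Real.sqrt 3) := by
  have h3hi := sqrt3_hi
  have h3lo := sqrt3_lo
  have hc1 : (0:ℝ) < 3 - Real.sqrt 3 := by linarith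
  apply ContinuousAt.mul continuousAt_const
  apply ContinuousAt.add (ContinuousAt.add ?_ ?_) continuousAt_const
  · apply ContinuousAt.log
    · exact continuousAt_const.add ((Real.continuous_sqrt.continuousAt).comp
        (((continuous_const.mul mfun_cont).add continuous_const).continuousAt :
          ContinuousAt (fun l => 2 * mfun l + (3 - Real.sqrt 3) ^ 2) _))
    · have : 0 ≤ 2 * mfun (12 * Real.sqrt 3) + (3 - Real.sqrt 3) ^ 2 := by
        rw [mfun_lamc]; positivity
      have hs := Real.sqrt_nonneg (2 * mfun (12 * Real.sqrt 3) + (3 - Real.sqrt 3) ^ 2)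
      positivity
  · apply ContinuousAt.log
    · exact continuousAt_const.add ((Real.continuous_sqrt.continuousAt).comp
        (((continuous_const.mul mfun_cont).add continuous_const).continuousAt :
          ContinuousAt (fun l => 2 * mfun l + Real.sqrt 3 ^ 2) _))
    · have hs := Real.sqrt_nonneg (2 * mfun (12 * Real.sqrt 3) + Real.sqrt 3 ^ 2)
      have := sqrt3_pos
      positivity

/-- As `λ → 12√3⁻`, `H(λ) + (1/3) ln(12√3 - λ)` tends to a finite constant `H₀`;
in particular `H(λ) → +∞`. -/
theorem stmt_6 :
    ∃ H₀ : ℝ,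
      Tendsto (fun lam => meniscusLength lam + 1 / 3 * Real.log (12 * Real.sqrt 3 - lam))
        (nhdsWithin (12 * Real.sqrt 3) (Iio (12 * Real.sqrt 3))) (nhds H₀) ∧
      Tendsto meniscusLength
        (nhdsWithin (12 * Real.sqrt 3) (Iio (12 * Real.sqrt 3))) atTop := by
  set lc := 12 * Real.sqrt 3 with hlc
  have hmem : Ioo (lc - 1) lc ∈ nhdsWithin lc (Iio lc) :=
    Ioo_mem_nhdsLT (by linarith [sqrt3_pos])
  set H₀ := (∫ r in (0:ℝ)..1, limF r) + Elog lc with hH0def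
  have hElog : Tendsto Elog (nhdsWithin lc (Iio lc)) (nhds (Elog lc)) :=
    Elog_contAt.tendsto.mono_left nhdsWithin_le_nhds
  have hmain : Tendsto (fun l => (∫ r in (0:ℝ)..1, (ffun l r - gfun l r)) + Elog l)
      (nhdsWithin lc (Iio lc)) (nhds H₀) :=
    tendsto_main_integral.add hElog
  have heq : (fun l => (∫ r in (0:ℝ)..1, (ffun l r - gfun l r)) + Elog l) =ᶠ[nhdsWithin lc (Iio lc)]
      (fun lam => meniscusLength lam + 1 / 3 * Real.log (12 * Real.sqrt 3 - lam)) := by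
    filter_upwards [hmem] with l hl
    rw [decomp hl.1.le hl.2]
    unfold Elog
    ring
  have h1 : Tendsto (fun lam => meniscusLength lam + 1 / 3 * Real.log (12 * Real.sqrt 3 - lam))
      (nhdsWithin lc (Iio lc)) (nhds H₀) := hmain.congr' heq
  refine ⟨H₀, h1, ?_⟩
  have hlog : Tendsto (fun l => Real.log (12 * Real.sqrt 3 - l)) (nhdsWithin lc (Iio lc)) atBot := by
    apply Real.tendsto_log_nhdsGT_zero.comp
    apply tendsto_nhdsWithin_of_tendsto_nhds_of_eventually_within
    · have : Tendsto (fun l : ℝ => 12 * Real.sqrt 3 - l) (nhds lc) (nhds (12 * Real.sqrt 3 - lc)) :=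
        (continuous_const.sub continuous_id).tendsto lc
      rw [hlc] at this ⊢
      simpa using this.mono_left nhdsWithin_le_nhds
    · filter_upwards [self_mem_nhdsWithin] with l hl
      simp only [mem_Ioi]
      have : l < lc := hl
      rw [hlc] at this
      linarith
  have h2 : Tendsto (fun l => (-1/3 : ℝ) * Real.log (12 * Real.sqrt 3 - l))
      (nhdsWithin lc (Iio lc)) atTop :=
    (tendsto_const_mul_atTop_of_neg (by norm_num : (-1/3 : ℝ) < 0)).2 hlog
  have h3 := h1.add_atTop h2
  apply h3.congr
  intro l
  ring
end

section
/- For every natural number n: (3n+3)(3n+5)(3n+7)·∫₀¹ (r − r³)^{n+2} dr = 4(n+2)(n+1)²·∫₀¹ (r − r³)^{n} dr. -/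
open Real

/-- Three-term recursion for the moments `∫₀¹ (r - r³)ⁿ dr`:
`(3n+3)(3n+5)(3n+7) ∫₀¹ (r-r³)^{n+2} dr = 4(n+2)(n+1)² ∫₀¹ (r-r³)ⁿ dr`. -/
theorem stmt_8 (n : ℕ) :
    (3 * (n : ℝ) + 3) * (3 * (n : ℝ) + 5) * (3 * (n : ℝ) + 7)
        * ∫ r in (0:ℝ)..1, (r - r ^ 3) ^ (n + 2)
      = 4 * ((n : ℝ) + 2) * ((n : ℝ) + 1) ^ 2
        * ∫ r in (0:ℝ)..1, (r - r ^ 3) ^ n := by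
  set m : ℝ := (n : ℝ) with hm
  set a : ℝ := -4 * (m + 2) * (m + 1) with ha
  set b : ℝ := 3 * (5 * m + 9) * (m + 1) with hb
  set c : ℝ := -3 * (m + 1) * (3 * m + 5) with hc
  set A : ℝ := (3 * m + 3) * (3 * m + 5) * (3 * m + 7) with hA
  set B : ℝ := 4 * (m + 2) * (m + 1) ^ 2 with hB
  have hderiv : ∀ x : ℝ, HasDerivAt
      (fun r : ℝ => (a + b * r ^ 2 + c * r ^ 4) * (r - r ^ 3) ^ (n + 1))
      (A * (x - x ^ 3) ^ (n + 2) - B * (x - x ^ 3) ^ n) x := by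
    intro x
    have h1 : HasDerivAt (fun r : ℝ => a + b * r ^ 2 + c * r ^ 4)
        (b * (2 * x) + c * (4 * x ^ 3)) x := by
      have := (((hasDerivAt_pow 2 x).const_mul b).add
        ((hasDerivAt_pow 4 x).const_mul c)).const_add a
      simpa [add_assoc] using this
    have h0 : HasDerivAt (fun r : ℝ => r - r ^ 3) (1 - 3 * x ^ 2) x := by
      have := (hasDerivAt_id x).sub (hasDerivAt_pow 3 x)
      simp at this
      exact this
    have h2 : HasDerivAt (fun r : ℝ => (r - r ^ 3) ^ (n + 1))
        ((n + 1) * (x - x ^ 3) ^ n * (1 - 3 * x ^ 2)) x := by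
      have := h0.pow (n + 1)
      simp at this
      exact this
    have h3 := h1.mul h2
    refine h3.congr_deriv ?_
    have e2 : (x - x ^ 3) ^ (n + 2) = (x - x ^ 3) ^ n * (x - x ^ 3) ^ 2 := by
      rw [pow_add]
    have e1 : (x - x ^ 3) ^ (n + 1) = (x - x ^ 3) ^ n * (x - x ^ 3) := by
      rw [pow_add, pow_one]
    rw [e2, e1, hA, hB, ha, hb, hc]
    ring
  have hcont2 : Continuous fun r : ℝ => (r - r ^ 3) ^ (n + 2) := by continuity
  have hcont0 : Continuous fun r : ℝ => (r - r ^ 3) ^ n := by continuity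
  have hint : ∫ r in (0:ℝ)..1,
      (A * (r - r ^ 3) ^ (n + 2) - B * (r - r ^ 3) ^ n) =
      (fun r : ℝ => (a + b * r ^ 2 + c * r ^ 4) * (r - r ^ 3) ^ (n + 1)) 1 -
      (fun r : ℝ => (a + b * r ^ 2 + c * r ^ 4) * (r - r ^ 3) ^ (n + 1)) 0 := by
    apply intervalIntegral.integral_eq_sub_of_hasDerivAt (fun x _ => hderiv x)
    exact ((continuous_const.mul hcont2).sub (continuous_const.mul hcont0)).intervalIntegrable 0 1
  norm_num [zero_pow (Nat.succ_ne_zero n)] at hint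
  rw [intervalIntegral.integral_sub (show IntervalIntegrable (fun r : ℝ => A * (r - r ^ 3) ^ (n + 2)) MeasureTheory.volume 0 1 by
        exact (continuous_const.mul hcont2).intervalIntegrable 0 1)
      (show IntervalIntegrable (fun r : ℝ => B * (r - r ^ 3) ^ n) MeasureTheory.volume 0 1 by
        exact (continuous_const.mul hcont0).intervalIntegrable 0 1),
    intervalIntegral.integral_const_mul, intervalIntegral.integral_const_mul] at hint
  have : A * ∫ r in (0:ℝ)..1, (r - r ^ 3) ^ (n + 2)
      = B * ∫ r in (0:ℝ)..1, (r - r ^ 3) ^ n := by linarith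
  calc (3 * m + 3) * (3 * m + 5) * (3 * m + 7)
        * ∫ r in (0:ℝ)..1, (r - r ^ 3) ^ (n + 2)
      = A * ∫ r in (0:ℝ)..1, (r - r ^ 3) ^ (n + 2) := by rw [hA]
    _ = B * ∫ r in (0:ℝ)..1, (r - r ^ 3) ^ n := this
    _ = _ := by rw [hB]
end

section
/- Let a₁ = 1, a_{2n+1} = a_{2n−1}(2n−1)/(2n), and b_k = 8^{−k} ∫₀¹ (r − r³)^k dr. Then for every λ with 0 ≤ λ < 12√3, the series Σ_{n=0}^∞ a_{2n+1} b_{2n+1} λ^{2n+1} converges and equals ∫₀¹ ((λ/8)(r − r³)) / √(1 − ((λ/8)(r − r³))²) dr. -/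
open Real Filter


noncomputable def cc : ℕ → ℝ
  | 0 => 1
  | n + 1 => cc n * (2 * n + 1) / (2 * n + 2)

lemma cc_pos (n : ℕ) : 0 < cc n := by
  induction n with
  | zero => norm_num [cc]
  | succ n ih =>
      rw [cc]
      positivity

lemma cc_le_one (n : ℕ) : cc n ≤ 1 := by
  induction n with
  | zero => norm_num [cc]
  | succ n ih =>
      rw [cc, div_le_one (by positivity)]
      nlinarith [cc_pos n]

lemma cc_succ (n : ℕ) : (2 * (n:ℝ) + 2) * cc (n + 1) = (2 * n + 1) * cc n := by
  rw [cc]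
  field_simp

lemma sum_cc_pow {s : ℝ} (hs : |s| < 1) : Summable (fun n => cc n * s ^ n) := by
  apply Summable.of_norm_bounded (summable_geometric_of_lt_one (abs_nonneg s) hs)
  intro n
  rw [norm_mul, norm_pow, Real.norm_eq_abs, Real.norm_eq_abs,
    abs_of_pos (cc_pos n)]
  calc cc n * |s| ^ n ≤ 1 * |s| ^ n := by
        gcongr; exact cc_le_one n
    _ = |s| ^ n := one_mul _

lemma sum_aux {w : ℝ} (h0 : 0 ≤ w) (h1 : w < 1) :
    Summable (fun n : ℕ => (n:ℝ) * w ^ (n - 1)) := by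
  rw [← summable_nat_add_iff 1]
  have : (fun n : ℕ => ((n + 1 : ℕ):ℝ) * w ^ (n + 1 - 1))
      = fun n : ℕ => (n:ℝ) * w ^ n + w ^ n := by
    funext n; push_cast; ring
  rw [this]
  exact ((summable_pow_mul_geometric_of_norm_lt_one 1 (by
    rwa [Real.norm_eq_abs, abs_of_nonneg h0])).congr (by simp)).add
    (summable_geometric_of_lt_one h0 h1)

lemma sum_cc_deriv {s : ℝ} (hs : |s| < 1) :
    Summable (fun n => cc n * ((n:ℝ) * s ^ (n - 1))) := by
  apply Summable.of_norm_bounded (sum_aux (abs_nonneg s) hs)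
  intro n
  rw [norm_mul, norm_mul, norm_pow, Real.norm_eq_abs, Real.norm_eq_abs, Real.norm_eq_abs,
    abs_of_pos (cc_pos n), abs_of_nonneg (Nat.cast_nonneg n)]
  calc cc n * ((n:ℝ) * |s| ^ (n-1)) ≤ 1 * ((n:ℝ) * |s| ^ (n-1)) := by
        gcongr; exact cc_le_one n
    _ = (n:ℝ) * |s| ^ (n-1) := one_mul _

noncomputable def SS : ℝ → ℝ := fun y => ∑' n, cc n * y ^ n
noncomputable def DD : ℝ → ℝ := fun y => ∑' n, cc n * ((n:ℝ) * y ^ (n - 1))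

lemma SS_deriv {y : ℝ} (hy : |y| < 1) : HasDerivAt SS (DD y) y := by
  set r : ℝ := (1 + |y|) / 2 with hrdef
  have hr0 : 0 < r := by positivity
  have hyr : |y| < r := by rw [hrdef]; linarith
  have hr1 : r < 1 := by rw [hrdef]; linarith
  have hra : |r| < 1 := by rwa [abs_of_pos hr0]
  apply hasDerivAt_tsum_of_isPreconnected
    (u := fun n : ℕ => (n:ℝ) * r ^ (n - 1))
    (sum_aux hr0.le hr1) isOpen_Ioo (convex_Ioo (-r) r).isPreconnected
    (g' := fun n z => cc n * ((n:ℝ) * z ^ (n - 1)))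
    (fun n z _ => (hasDerivAt_pow n z).const_mul (cc n))
    ?_ (y₀ := 0) (by constructor <;> simp [hr0, hr0.le] <;> linarith) ?_
    (by rw [Set.mem_Ioo, ← abs_lt]; exact hyr)
  · intro n z hz
    have hzr : |z| ≤ r := le_of_lt (abs_lt.2 ⟨hz.1, hz.2⟩)
    rw [Real.norm_eq_abs, abs_mul, abs_mul, abs_of_pos (cc_pos n),
      abs_of_nonneg (Nat.cast_nonneg n), abs_pow]
    have hp : |z| ^ (n-1) ≤ r ^ (n-1) := pow_le_pow_left₀ (abs_nonneg z) hzr _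
    calc cc n * ((n:ℝ) * |z| ^ (n-1)) ≤ 1 * ((n:ℝ) * |z| ^ (n-1)) :=
          mul_le_mul_of_nonneg_right (cc_le_one n) (by positivity)
      _ = (n:ℝ) * |z| ^ (n-1) := one_mul _
      _ ≤ (n:ℝ) * r ^ (n-1) := mul_le_mul_of_nonneg_left hp (Nat.cast_nonneg n)
  · apply summable_of_ne_finset_zero (s := {0})
    intro n hn
    simp only [Finset.mem_singleton] at hn
    simp [zero_pow hn]

lemma SS_ode {y : ℝ} (hy : |y| < 1) : 2 * (1 - y) * DD y - SS y = 0 := by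
  set G : ℕ → ℝ := fun n => (2 * n + 1) * cc n * y ^ n with hG
  set E : ℕ → ℝ := fun n => 2 * (1 - y) * (cc n * ((n:ℝ) * y ^ (n - 1))) - cc n * y ^ n with hE
  have hE0 : E 0 = -G 0 := by simp [hE, hG]
  have hEs : ∀ n : ℕ, E (n + 1) = G n - G (n + 1) := by
    intro n
    have hc := cc_succ n
    simp only [hE, hG, Nat.add_sub_cancel, pow_succ]
    push_cast
    linear_combination (y ^ n) * hc
  have hGtend : Tendsto G atTop (nhds 0) := by
    apply squeeze_zero_norm (a := fun n : ℕ => (2 * (n:ℝ) + 1) * |y| ^ n) ?_ ?_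
    · intro n
      rw [hG, Real.norm_eq_abs, abs_mul, abs_mul, abs_pow,
        abs_of_pos (cc_pos n), abs_of_pos (by positivity : (0:ℝ) < 2 * n + 1)]
      have h1 : (2 * (n:ℝ) + 1) * cc n ≤ (2 * (n:ℝ) + 1) * 1 := by
        have : (0:ℝ) ≤ 2 * (n:ℝ) + 1 := by positivity
        exact mul_le_mul_of_nonneg_left (cc_le_one n) this
      simpa using mul_le_mul_of_nonneg_right h1 (pow_nonneg (abs_nonneg y) n)
    · have hsum : Summable (fun n : ℕ => (2 * (n:ℝ) + 1) * |y| ^ n) := by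
        have h1 := summable_pow_mul_geometric_of_norm_lt_one (R := ℝ) 1
          (by rwa [Real.norm_eq_abs, abs_abs])
        have h2 := summable_geometric_of_lt_one (abs_nonneg y) hy
        have := (h1.mul_left 2).add h2
        apply this.congr
        intro n; push_cast; ring
      exact hsum.tendsto_atTop_zero
  have hsumE : Summable E := ((sum_cc_deriv hy).mul_left _).sub (sum_cc_pow hy)
  have hhasE : HasSum E (2 * (1 - y) * DD y - SS y) :=
    (((sum_cc_deriv hy).hasSum.mul_left _).sub (sum_cc_pow hy).hasSum)
  have hE_zero : HasSum E 0 := by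
    rw [hsumE.hasSum_iff_tendsto_nat]
    have hps : ∀ N : ℕ, ∑ i ∈ Finset.range (N + 1), E i = -G N := by
      intro N
      induction N with
      | zero => simpa using hE0
      | succ N ih => rw [Finset.sum_range_succ, ih, hEs]; ring
    rw [← Filter.tendsto_add_atTop_iff_nat 1]
    simp only [hps]
    simpa using hGtend.neg
  exact hhasE.unique hE_zero

lemma SS_eq {t : ℝ} (h0 : 0 ≤ t) (h1 : t < 1) : SS t = (Real.sqrt (1 - t))⁻¹ := by
  set F : ℝ → ℝ := fun y => SS y ^ 2 * (1 - y) with hF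
  have hFd : ∀ y ∈ Set.Ioo (-1 : ℝ) 1, HasDerivAt F 0 y := by
    intro y hy
    have hy' : |y| < 1 := abs_lt.2 ⟨hy.1, hy.2⟩
    have h1 : HasDerivAt (fun z => SS z ^ 2) (2 * SS y ^ 1 * DD y) y := by
      simpa using (SS_deriv hy').fun_pow 2
    have h2 : HasDerivAt (fun z : ℝ => 1 - z) (-1) y := by
      simpa using ((hasDerivAt_id y).const_sub 1)
    have := h1.fun_mul h2
    rw [show (0:ℝ) = 2 * SS y ^ 1 * DD y * (1 - y) + SS y ^ 2 * -1 by
      have hode := SS_ode hy'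
      simp only [pow_one]
      linear_combination (- SS y) * hode]
    exact this
  have hconst : F t = F 0 := by
    have key := constant_of_has_deriv_right_zero (f := F) (a := 0) (b := t)
      (fun x hx => (hFd x ⟨by linarith [hx.1], by linarith [hx.2]⟩).continuousAt.continuousWithinAt)
      (fun x hx => (hFd x ⟨by linarith [hx.1], by linarith [hx.2]⟩).hasDerivWithinAt)
    exact key t ⟨h0, le_refl t⟩
  have hS0 : SS 0 = 1 := by
    rw [SS]
    rw [tsum_eq_single 0 (fun n hn => by simp [zero_pow hn])]
    simp [cc]
  have hF0 : F 0 = 1 := by simp [hF, hS0]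
  have hFt : SS t ^ 2 * (1 - t) = 1 := by
    have h := hconst.trans hF0
    simpa only [hF] using h
  have hS1 : 1 ≤ SS t := by
    have := (sum_cc_pow (by rwa [abs_of_nonneg h0])).hasSum
    have h := le_hasSum this 0 (fun j _ => mul_nonneg (cc_pos j).le (pow_nonneg h0 j))
    simpa [cc, SS] using h
  have h1t : (0:ℝ) < 1 - t := by linarith
  have hx : SS t * Real.sqrt (1 - t) = 1 := by
    have hsq : (SS t * Real.sqrt (1 - t)) ^ 2 = 1 := by
      rw [mul_pow, Real.sq_sqrt h1t.le]; exact hFt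
    nlinarith [mul_nonneg (by linarith : (0:ℝ) ≤ SS t) (Real.sqrt_nonneg (1 - t))]
  have hs : Real.sqrt (1 - t) ≠ 0 := ne_of_gt (Real.sqrt_pos.2 h1t)
  field_simp at hx ⊢
  linarith [hx]

lemma hasSum_cc {t : ℝ} (h0 : 0 ≤ t) (h1 : t < 1) :
    HasSum (fun n => cc n * t ^ n) ((Real.sqrt (1 - t))⁻¹) := by
  have h := (sum_cc_pow (by rwa [abs_of_nonneg h0])).hasSum
  rwa [show (∑' n, cc n * t ^ n) = SS t from rfl, SS_eq h0 h1] at h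

lemma hasSum_odd {x : ℝ} (hx0 : 0 ≤ x) (hx1 : x < 1) :
    HasSum (fun n => cc n * x ^ (2 * n + 1)) (x / Real.sqrt (1 - x ^ 2)) := by
  have ht1 : x ^ 2 < 1 := by nlinarith
  have h := (hasSum_cc (sq_nonneg x) ht1).mul_left x
  have heq : (fun n => x * (cc n * (x ^ 2) ^ n)) = fun n => cc n * x ^ (2 * n + 1) := by
    funext n; rw [← pow_mul]; ring
  rw [heq] at h
  rwa [← div_eq_mul_inv] at h

lemma cubic_bound {r : ℝ} (h0 : 0 ≤ r) (h1 : r ≤ 1) :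
    3 * Real.sqrt 3 * (r - r ^ 3) ≤ 2 := by
  have h3 : Real.sqrt 3 * Real.sqrt 3 = 3 := Real.mul_self_sqrt (by norm_num)
  have key : 2 - 3 * Real.sqrt 3 * (r - r ^ 3)
      = (Real.sqrt 3 * r + 2) * (Real.sqrt 3 * r - 1) ^ 2 := by
    linear_combination (-(Real.sqrt 3 * r ^ 3)) * h3
  have hprod : 0 ≤ (Real.sqrt 3 * r + 2) * (Real.sqrt 3 * r - 1) ^ 2 :=
    mul_nonneg (by positivity) (sq_nonneg _)
  linarith

/-- The exact series solution for the meniscus length with contact angle `π/2`: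
with `a₁ = 1`, `a_{2n+1} = a_{2n-1}(2n-1)/(2n)` and `b_k = 8^{-k} ∫₀¹ (r-r³)^k dr`,
for `0 ≤ λ < 12√3` the series `Σ a_{2n+1} b_{2n+1} λ^{2n+1}` converges to
`∫₀¹ ((λ/8)(r-r³)) / √(1 - ((λ/8)(r-r³))²) dr`. -/
theorem stmt_9 (a : ℕ → ℝ) (ha1 : a 1 = 1)
    (harec : ∀ n : ℕ, 1 ≤ n →
      a (2 * n + 1) = a (2 * n - 1) * (2 * (n : ℝ) - 1) / (2 * (n : ℝ)))
    (b : ℕ → ℝ)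
    (hb : ∀ k : ℕ, b k = (1 / (8:ℝ) ^ k) * ∫ r in (0:ℝ)..1, (r - r ^ 3) ^ k)
    (lam : ℝ) (h0 : 0 ≤ lam) (hc : lam < 12 * Real.sqrt 3) :
    HasSum (fun n : ℕ => a (2 * n + 1) * b (2 * n + 1) * lam ^ (2 * n + 1))
      (∫ r in (0:ℝ)..1,
        (lam / 8 * (r - r ^ 3)) / Real.sqrt (1 - (lam / 8 * (r - r ^ 3)) ^ 2)) := by
  have hs3 : (0:ℝ) < Real.sqrt 3 := Real.sqrt_pos.2 (by norm_num)
  set q : ℝ := lam / (12 * Real.sqrt 3) with hq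
  have hq0 : 0 ≤ q := by positivity
  have hq1 : q < 1 := (div_lt_one (by positivity)).2 hc
  have ha_cc : ∀ n : ℕ, a (2 * n + 1) = cc n := by
    intro n
    induction n with
    | zero => simpa [cc] using ha1
    | succ n ih =>
        have h := harec (n + 1) (Nat.succ_le_succ (Nat.zero_le n))
        have h2 : 2 * (n + 1) - 1 = 2 * n + 1 := by omega
        rw [h2] at h
        rw [h, ih, cc]
        push_cast
        ring
  set x : ℝ → ℝ := fun r => lam / 8 * (r - r ^ 3) with hxdef
  have hx : ∀ r ∈ Set.Ioc (0:ℝ) 1, 0 ≤ x r ∧ x r ≤ q := by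
    intro r hr
    have hr0 : 0 ≤ r := hr.1.le
    have hr1 : r ≤ 1 := hr.2
    have hrr : 0 ≤ r - r ^ 3 := by
      nlinarith [mul_nonneg (mul_nonneg hr0 (sub_nonneg.2 hr1)) (by linarith : (0:ℝ) ≤ 1 + r)]
    constructor
    · positivity
    · have hcb := cubic_bound hr0 hr1
      show lam / 8 * (r - r ^ 3) ≤ lam / (12 * Real.sqrt 3)
      rw [div_mul_eq_mul_div, div_le_div_iff₀ (by norm_num) (by positivity)]
      nlinarith [mul_nonneg h0 hrr, mul_le_mul_of_nonneg_left hcb h0]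
  set F : ℕ → ℝ → ℝ := fun n r => cc n * x r ^ (2 * n + 1) with hFdef
  have hFc : ∀ n, Continuous (F n) := by
    intro n
    apply Continuous.mul continuous_const
    exact (continuous_const.mul (continuous_id.sub (continuous_pow 3))).pow _
  have hF_int : ∀ n, MeasureTheory.IntegrableOn (F n) (Set.Ioc 0 1) MeasureTheory.volume :=
    fun n => (hFc n).integrableOn_Ioc
  have hnorm : ∀ n, (∫ r in Set.Ioc (0:ℝ) 1, ‖F n r‖) ≤ q ^ (2 * n + 1) := by
    intro n
    have hb' : ∀ r ∈ Set.Ioc (0:ℝ) 1, ‖F n r‖ ≤ q ^ (2 * n + 1) := by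
      intro r hr
      obtain ⟨h1, h2⟩ := hx r hr
      rw [hFdef]
      simp only [Real.norm_eq_abs, abs_mul, abs_pow, abs_of_pos (cc_pos n), abs_of_nonneg h1]
      calc cc n * x r ^ (2 * n + 1) ≤ 1 * q ^ (2 * n + 1) := by
            apply mul_le_mul (cc_le_one n) (pow_le_pow_left₀ h1 h2 _)
              (pow_nonneg h1 _) zero_le_one
        _ = q ^ (2 * n + 1) := one_mul _
    calc (∫ r in Set.Ioc (0:ℝ) 1, ‖F n r‖)
        ≤ ∫ _ in Set.Ioc (0:ℝ) 1, q ^ (2 * n + 1) := by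
          apply MeasureTheory.setIntegral_mono_on (hF_int n).norm
            (MeasureTheory.integrableOn_const measure_Ioc_lt_top.ne)
            measurableSet_Ioc hb'
      _ = q ^ (2 * n + 1) := by
          rw [MeasureTheory.setIntegral_const, Real.volume_real_Ioc, smul_eq_mul]
          norm_num
  have hsum_int : Summable (fun n => ∫ r in Set.Ioc (0:ℝ) 1, ‖F n r‖) := by
    apply Summable.of_nonneg_of_le
      (fun n => MeasureTheory.integral_nonneg fun r => norm_nonneg _) hnorm
    have hgeo : Summable (fun n : ℕ => q * (q ^ 2) ^ n) :=
      (summable_geometric_of_lt_one (by positivity) (by nlinarith)).mul_left q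
    apply hgeo.congr
    intro n
    rw [← pow_mul]
    ring
  have key := MeasureTheory.hasSum_integral_of_summable_integral_norm
    (μ := MeasureTheory.volume.restrict (Set.Ioc (0:ℝ) 1)) (F := F) hF_int hsum_int
  have hpt : ∀ r ∈ Set.Ioc (0:ℝ) 1,
      (∑' n, F n r) = x r / Real.sqrt (1 - x r ^ 2) := by
    intro r hr
    obtain ⟨h1, h2⟩ := hx r hr
    exact (hasSum_odd h1 (lt_of_le_of_lt h2 hq1)).tsum_eq
  have hint_eq : (∫ r in Set.Ioc (0:ℝ) 1, ∑' n, F n r)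
      = ∫ r in (0:ℝ)..1, x r / Real.sqrt (1 - x r ^ 2) := by
    rw [intervalIntegral.integral_of_le zero_le_one]
    exact MeasureTheory.setIntegral_congr_fun measurableSet_Ioc hpt
  rw [hint_eq] at key
  have hterm : ∀ n : ℕ, (∫ r in Set.Ioc (0:ℝ) 1, F n r)
      = a (2 * n + 1) * b (2 * n + 1) * lam ^ (2 * n + 1) := by
    intro n
    rw [← intervalIntegral.integral_of_le zero_le_one]
    have hFr : ∀ r : ℝ, F n r = (cc n * (lam / 8) ^ (2 * n + 1)) * (r - r ^ 3) ^ (2 * n + 1) := by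
      intro r
      show cc n * (lam / 8 * (r - r ^ 3)) ^ (2 * n + 1)
          = cc n * (lam / 8) ^ (2 * n + 1) * (r - r ^ 3) ^ (2 * n + 1)
      rw [mul_pow]
      ring
    simp only [hFr]
    rw [intervalIntegral.integral_const_mul, ha_cc n, hb (2 * n + 1)]
    rw [div_pow]
    ring
  have : (fun n : ℕ => a (2 * n + 1) * b (2 * n + 1) * lam ^ (2 * n + 1))
      = fun n : ℕ => ∫ r in Set.Ioc (0:ℝ) 1, F n r := by
    funext n; rw [hterm n]
  rw [this]
  exact key
end

section
/- With a₁ = 1, a_{2n+1} = a_{2n−1}(2n−1)/(2n) and b_k = 8^{−k} ∫₀¹ (r − r³)^k dr, the ratio (a_{2n+1} b_{2n+1}) / (a_{2n−1} b_{2n−1}) converges as n → ∞ to 1/432 = 1/(12√3)². Hence the power series Σ a_{2n+1} b_{2n+1} λ^{2n+1} converges for |λ| < 12√3 and diverges for |λ| > 12√3. -/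
open Real Filter intervalIntegral Set

lemma beta_nat : ∀ (m n : ℕ), ∫ x in (0:ℝ)..1, x ^ n * (1 - x) ^ m
    = (n.factorial * m.factorial : ℝ) / (n + m + 1).factorial := by
  intro m
  induction m with
  | zero =>
    intro n
    simp only [pow_zero, mul_one, integral_pow, Nat.factorial]
    rw [show n + 0 + 1 = n + 1 by omega]
    push_cast [Nat.factorial_succ]
    rw [one_pow, zero_pow (by omega)]
    have h : ((n:ℝ) + 1) ≠ 0 := by positivity
    have h2 : (n.factorial : ℝ) ≠ 0 := by positivity
    field_simp
    norm_num
  | succ m ih =>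
    intro n
    have hu : ∀ x ∈ uIcc (0:ℝ) 1, HasDerivAt (fun x : ℝ => (1 - x) ^ (m + 1))
        (-(((m:ℝ)+1) * (1 - x) ^ m)) x := by
      intro x _
      have h1 : HasDerivAt (fun x : ℝ => 1 - x) (-1) x := (hasDerivAt_id x).const_sub 1
      have h2 := h1.pow (m + 1)
      refine h2.congr_deriv ?_
      push_cast
      ring
    have hv : ∀ x ∈ uIcc (0:ℝ) 1, HasDerivAt (fun x : ℝ => x ^ (n + 1) / ((n:ℝ) + 1))
        (x ^ n) x := by
      intro x _
      have h2 := (hasDerivAt_pow (n + 1) x).div_const ((n:ℝ) + 1)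
      refine h2.congr_deriv ?_
      have h : ((n:ℝ) + 1) ≠ 0 := by positivity
      push_cast
      field_simp
    have hu' : IntervalIntegrable (fun x : ℝ => -(((m:ℝ)+1) * (1 - x) ^ m)) MeasureTheory.volume 0 1 :=
      (by fun_prop : Continuous fun x : ℝ => -(((m:ℝ)+1) * (1 - x) ^ m)).intervalIntegrable 0 1
    have hv' : IntervalIntegrable (fun x : ℝ => x ^ n) MeasureTheory.volume 0 1 :=
      (by fun_prop : Continuous fun x : ℝ => x ^ n).intervalIntegrable 0 1
    have key := intervalIntegral.integral_mul_deriv_eq_deriv_mul hu hv hu' hv'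
    have hcomm : (∫ x in (0:ℝ)..1, x ^ n * (1 - x) ^ (m+1))
        = ∫ x in (0:ℝ)..1, (1 - x) ^ (m+1) * x ^ n :=
      intervalIntegral.integral_congr fun x _ => mul_comm _ _
    rw [hcomm, key]
    have hptw : ∀ x : ℝ, (-(((m:ℝ)+1) * (1 - x) ^ m)) * (x ^ (n+1) / ((n:ℝ)+1))
        = (-(((m:ℝ)+1) / ((n:ℝ)+1))) * (x ^ (n+1) * (1 - x) ^ m) := by
      intro x
      have h : ((n:ℝ) + 1) ≠ 0 := by positivity
      field_simp
    rw [intervalIntegral.integral_congr (fun x _ => hptw x), intervalIntegral.integral_const_mul,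
      ih (n+1)]
    have h1 : ((n:ℝ) + 1) ≠ 0 := by positivity
    have h2 : ((n + 1 + m + 1).factorial : ℝ) ≠ 0 := by positivity
    have h3 : ((n + (m+1) + 1).factorial : ℝ) ≠ 0 := by positivity
    rw [show n + 1 + m + 1 = n + m + 2 by omega] at *
    rw [show n + (m+1) + 1 = n + m + 2 by omega]
    push_cast [Nat.factorial_succ]
    have h4 : ((n:ℝ) + (m:ℝ) + 1) ≠ 0 := by positivity
    have h5 : ((n:ℝ) + (m:ℝ) + 1 + 1) ≠ 0 := by positivity
    have h6 : (((n+m).factorial :ℕ):ℝ) ≠ 0 := by positivity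
    simp only [sub_self, sub_zero, one_pow, zero_pow (Nat.succ_ne_zero m),
      zero_pow (Nat.succ_ne_zero n), zero_mul, mul_zero, zero_div, zero_sub, mul_one]
    field_simp

lemma intI (n : ℕ) : ∫ r in (0:ℝ)..1, (r - r ^ 3) ^ (2*n+1)
    = (1/2) * ((n.factorial * (2*n+1).factorial : ℝ) / (3*n+2).factorial) := by
  have hg : Continuous fun u : ℝ => (1/2 : ℝ) * (u ^ n * (1 - u) ^ (2*n+1)) := by fun_prop
  have hf : ∀ x ∈ uIcc (0:ℝ) 1, HasDerivAt (fun x : ℝ => x ^ 2) (2 * x) x := by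
    intro x _
    simpa using hasDerivAt_pow 2 x
  have hf' : ContinuousOn (fun x : ℝ => 2 * x) (uIcc 0 1) := by fun_prop
  have key := intervalIntegral.integral_comp_smul_deriv hf hf' hg
  have hptw : ∀ x : ℝ, (x - x ^ 3) ^ (2*n+1)
      = (2 * x) • ((1/2 : ℝ) * ((x ^ 2) ^ n * (1 - x ^ 2) ^ (2*n+1))) := by
    intro x
    rw [smul_eq_mul, show x - x ^ 3 = x * (1 - x ^ 2) by ring, mul_pow, ← pow_mul, pow_succ]
    ring
  simp only [Function.comp] at key
  rw [intervalIntegral.integral_congr (fun x _ => hptw x), key]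
  norm_num
  rw [beta_nat (2*n+1) n, show n + (2*n+1) + 1 = 3*n+2 by omega]

/-- Ratio test for the meniscus-length series: the consecutive-coefficient ratio
`(a_{2n+1} b_{2n+1})/(a_{2n-1} b_{2n-1})` tends to `1/432 = 1/(12√3)²`, hence
`Σ a_{2n+1} b_{2n+1} λ^{2n+1}` converges for `|λ| < 12√3` and diverges for
`|λ| > 12√3`. -/
theorem stmt_10 (a : ℕ → ℝ) (ha1 : a 1 = 1)
    (harec : ∀ n : ℕ, 1 ≤ n →
      a (2 * n + 1) = a (2 * n - 1) * (2 * (n : ℝ) - 1) / (2 * (n : ℝ)))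
    (b : ℕ → ℝ)
    (hb : ∀ k : ℕ, b k = (1 / (8:ℝ) ^ k) * ∫ r in (0:ℝ)..1, (r - r ^ 3) ^ k) :
    Tendsto (fun n : ℕ =>
        (a (2 * n + 1) * b (2 * n + 1)) / (a (2 * n - 1) * b (2 * n - 1)))
      atTop (nhds (1 / 432)) ∧
    (1 / 432 : ℝ) = 1 / (12 * Real.sqrt 3) ^ 2 ∧
    (∀ lam : ℝ, |lam| < 12 * Real.sqrt 3 →
      Summable (fun n : ℕ => a (2 * n + 1) * b (2 * n + 1) * lam ^ (2 * n + 1))) ∧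
    (∀ lam : ℝ, 12 * Real.sqrt 3 < |lam| →
      ¬ Summable (fun n : ℕ => a (2 * n + 1) * b (2 * n + 1) * lam ^ (2 * n + 1))) := by
  have h432 : (12 * Real.sqrt 3) ^ 2 = 432 := by
    rw [mul_pow, Real.sq_sqrt (by norm_num : (0:ℝ) ≤ 3)]
    norm_num
  set c : ℕ → ℝ := fun n => a (2 * n + 1) * b (2 * n + 1) with hc
  set R : ℕ → ℝ := fun n =>
    ((2*(n:ℝ)+1) * ((n:ℝ)+1) * (2*(n:ℝ)+3)) /
      (64 * ((3*(n:ℝ)+3) * (3*(n:ℝ)+4) * (3*(n:ℝ)+5))) with hRdef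
  have hbval : ∀ n : ℕ, b (2*n+1)
      = (1/(8:ℝ)^(2*n+1)) * ((1/2) * ((n.factorial * (2*n+1).factorial : ℝ) / (3*n+2).factorial)) := by
    intro n; rw [hb, intI]
  have hbpos : ∀ n : ℕ, 0 < b (2*n+1) := by
    intro n; rw [hbval]; positivity
  have hA : ∀ n : ℕ, a (2*(n+1)+1) = a (2*n+1) * ((2*(n:ℝ)+1) / (2*(n:ℝ)+2)) := by
    intro n
    have h := harec (n+1) (by omega)
    rw [show 2*(n+1) - 1 = 2*n+1 by omega] at h
    rw [h]
    push_cast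
    ring
  have hApos : ∀ n : ℕ, 0 < a (2*n+1) := by
    intro n
    induction n with
    | zero => norm_num [ha1]
    | succ k ih =>
      rw [hA k]
      have hq : (0:ℝ) < (2*(k:ℝ)+1) / (2*(k:ℝ)+2) := by positivity
      exact mul_pos ih hq
  have hcpos : ∀ n : ℕ, 0 < c n := fun n => mul_pos (hApos n) (hbpos n)
  have hrec : ∀ n : ℕ, c (n+1) = c n * R n := by
    intro n
    show a (2*(n+1)+1) * b (2*(n+1)+1) = a (2*n+1) * b (2*n+1) * R n
    rw [hA n, hbval n, hbval (n+1)]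
    have e1 : (((n+1).factorial : ℕ) : ℝ) = ((n:ℝ)+1) * n.factorial := by
      push_cast [Nat.factorial_succ]; ring
    have e2 : (((2*(n+1)+1).factorial : ℕ) : ℝ)
        = (2*(n:ℝ)+3) * (2*(n:ℝ)+2) * (2*n+1).factorial := by
      rw [show 2*(n+1)+1 = (2*n+1)+1+1 by omega]
      push_cast [Nat.factorial_succ]; ring
    have e3 : (((3*(n+1)+2).factorial : ℕ) : ℝ)
        = (3*(n:ℝ)+5) * (3*(n:ℝ)+4) * (3*(n:ℝ)+3) * (3*n+2).factorial := by
      rw [show 3*(n+1)+2 = (3*n+2)+1+1+1 by omega]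
      push_cast [Nat.factorial_succ]; ring
    have e4 : ((8:ℝ)^(2*(n+1)+1)) = 8^(2*n+1) * 64 := by
      rw [show 2*(n+1)+1 = (2*n+1)+2 by omega, pow_add]; norm_num
    rw [e1, e2, e3, e4, hRdef]
    have p1 : ((8:ℝ)^(2*n+1)) ≠ 0 := by positivity
    have p2 : ((n.factorial : ℕ) : ℝ) ≠ 0 := by positivity
    have p3 : (((2*n+1).factorial : ℕ) : ℝ) ≠ 0 := by positivity
    have p4 : (((3*n+2).factorial : ℕ) : ℝ) ≠ 0 := by positivity
    have p5 : (2*(n:ℝ)+2) ≠ 0 := by positivity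
    have p6 : (3*(n:ℝ)+3) ≠ 0 := by positivity
    have p7 : (3*(n:ℝ)+4) ≠ 0 := by positivity
    have p8 : (3*(n:ℝ)+5) ≠ 0 := by positivity
    field_simp
  have hRlim : Tendsto R atTop (nhds (1/432)) := by
    have h0 : Tendsto (fun n : ℕ => 1/(n:ℝ)) atTop (nhds 0) :=
      tendsto_one_div_atTop_nhds_zero_nat
    have hnum : Tendsto (fun n : ℕ => (2+1/(n:ℝ)) * (1+1/(n:ℝ)) * (2+3*(1/(n:ℝ))))
        atTop (nhds ((2+0) * (1+0) * (2+3*0))) :=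
      ((tendsto_const_nhds.add h0).mul (tendsto_const_nhds.add h0)).mul
        (tendsto_const_nhds.add (h0.const_mul 3))
    have hden : Tendsto (fun n : ℕ => (64:ℝ) * ((3+3*(1/(n:ℝ))) * (3+4*(1/(n:ℝ))) * (3+5*(1/(n:ℝ)))))
        atTop (nhds (64 * ((3+3*0) * (3+4*0) * (3+5*0)))) :=
      tendsto_const_nhds.mul
        (((tendsto_const_nhds.add (h0.const_mul 3)).mul
          (tendsto_const_nhds.add (h0.const_mul 4))).mul
          (tendsto_const_nhds.add (h0.const_mul 5)))
    have hdiv := hnum.div hden (by norm_num)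
    rw [show ((2+0) * (1+0) * (2+3*0) : ℝ) / (64 * ((3+3*0) * (3+4*0) * (3+5*0))) = 1/432
      by norm_num] at hdiv
    refine Tendsto.congr' ?_ hdiv
    filter_upwards [eventually_ge_atTop 1] with n hn
    have hne : ((n:ℝ)) ≠ 0 := by
      have : (0:ℝ) < n := by exact_mod_cast hn
      positivity
    rw [hRdef]
    simp only [Pi.div_apply]
    field_simp
  have hRatio : Tendsto (fun n : ℕ => c (n+1) / c n) atTop (nhds (1/432)) := by
    refine hRlim.congr fun n => ?_
    rw [hrec n, mul_div_cancel_left₀ _ (hcpos n).ne']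
  have hfr : ∀ lam : ℝ, lam ≠ 0 →
      Tendsto (fun n : ℕ => ‖c (n+1) * lam ^ (2*(n+1)+1)‖ / ‖c n * lam ^ (2*n+1)‖)
        atTop (nhds (lam^2 / 432)) := by
    intro lam hlam
    have hcalc : ∀ n : ℕ, ‖c (n+1) * lam ^ (2*(n+1)+1)‖ / ‖c n * lam ^ (2*n+1)‖
        = R n * lam^2 := by
      intro n
      simp only [norm_mul, norm_pow, Real.norm_eq_abs]
      rw [abs_of_pos (hcpos (n+1)), abs_of_pos (hcpos n), hrec n,
        show 2*(n+1)+1 = (2*n+1)+2 by omega, pow_add, sq_abs]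
      obtain ⟨rn, hrn⟩ : ∃ x, x = R n := ⟨_, rfl⟩
      obtain ⟨cn, hcn⟩ : ∃ x, x = c n := ⟨_, rfl⟩
      have qc : cn ≠ 0 := by rw [hcn]; exact (hcpos n).ne'
      have q2 : |lam| ^ (2*n+1) ≠ 0 := pow_ne_zero _ (abs_ne_zero.mpr hlam)
      rw [← hrn, ← hcn]
      field_simp
    have := hRlim.mul_const (lam^2)
    rw [show (1/432 : ℝ) * lam^2 = lam^2/432 by ring] at this
    exact this.congr fun n => (hcalc n).symm
  refine ⟨?_, ?_, ?_, ?_⟩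
  · have hcomp := hRatio.comp (tendsto_sub_atTop_nat 1)
    refine Tendsto.congr' ?_ hcomp
    filter_upwards [eventually_ge_atTop 1] with n hn
    show c (n - 1 + 1) / c (n - 1) = a (2*n+1) * b (2*n+1) / (a (2*n-1) * b (2*n-1))
    rw [show n - 1 + 1 = n from by omega, show 2*n - 1 = 2*(n-1)+1 from by omega]
  · rw [h432]
  · intro lam hlam
    rcases eq_or_ne lam 0 with h0 | h0
    · have : (fun n : ℕ => a (2*n+1) * b (2*n+1) * lam ^ (2*n+1)) = fun _ => 0 := by
        funext n
        rw [h0, zero_pow (by omega : 2*n+1 ≠ 0), mul_zero]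
      rw [this]
      exact summable_zero
    · have hlt : lam^2 < 432 := by
        nlinarith [abs_nonneg lam, sq_abs lam, hlam, h432]
      refine summable_of_ratio_test_tendsto_lt_one (l := lam^2/432)
        (by rw [div_lt_one (by norm_num : (0:ℝ) < 432)]; linarith) ?_ (hfr lam h0)
      filter_upwards with n
      exact mul_ne_zero (hcpos n).ne' (pow_ne_zero _ h0)
  · intro lam hlam
    have hs : (0:ℝ) < 12 * Real.sqrt 3 := by positivity
    have h0 : lam ≠ 0 := by
      intro h
      rw [h, abs_zero] at hlam
      linarith
    have hgt : 432 < lam^2 := by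
      nlinarith [abs_nonneg lam, sq_abs lam, hlam, h432]
    exact not_summable_of_ratio_test_tendsto_gt_one (l := lam^2/432)
      (by rw [lt_div_iff₀ (by norm_num : (0:ℝ) < 432)]; linarith) (hfr lam h0)
end

section
/- For each fixed r ∈ (0,1), the function λ ↦ ( r + λ(r − r³)/8 ) / √( 1 − ( r + λ(r − r³)/8 )² ) is real-analytic on the open interval ( −8/(r(1 − r)), 8/(r(1 + r)) ). Consequently its Taylor series about λ = 0 converges for |λ| < 8/(r + r²), and since the infimum of 8/(r + r²) over r ∈ (0,1] is 4, the bubble slope series in powers of λ converges for all r whenever 0 ≤ λ < 4. -/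
open Real Set



namespace Stmt14Aux

/-- The complex extension of the bubble slope. -/
noncomputable def F (r : ℝ) (z : ℂ) : ℂ :=
  ((r : ℂ) + z * (((r - r ^ 3) / 8 : ℝ) : ℂ)) *
    (1 - ((r : ℂ) + z * (((r - r ^ 3) / 8 : ℝ) : ℂ)) ^ 2) ^ (-(1/2) : ℂ)

lemma slit {s : ℂ} (hs : ‖s‖ < 1) : (1 - s ^ 2) ∈ Complex.slitPlane := by
  left
  have h2 : Complex.normSq s < 1 := by
    rw [← Complex.sq_norm]; nlinarith [norm_nonneg s]
  have h3 : Complex.normSq s = s.re * s.re + s.im * s.im := Complex.normSq_apply s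
  have h1 : (1 - s ^ 2).re = 1 - (s.re * s.re - s.im * s.im) := by
    simp [pow_two, Complex.mul_re]
  rw [h1]; nlinarith [sq_nonneg s.im]

lemma FanalyticAt (r : ℝ) {z : ℂ}
    (hz : ‖(r : ℂ) + z * (((r - r ^ 3) / 8 : ℝ) : ℂ)‖ < 1) :
    AnalyticAt ℂ (F r) z := by
  have h1 : AnalyticAt ℂ (fun z : ℂ => (r : ℂ) + z * (((r - r ^ 3) / 8 : ℝ) : ℂ)) z :=
    analyticAt_const.add (analyticAt_id.mul analyticAt_const)
  exact h1.mul ((analyticAt_const.sub (h1.pow 2)).cpow analyticAt_const (slit hz))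

lemma F_real (r x : ℝ) (h1 : -1 < r + x * (r - r ^ 3) / 8) (h2 : r + x * (r - r ^ 3) / 8 < 1) :
    F r x = ((r + x * (r - r ^ 3) / 8) / Real.sqrt (1 - (r + x * (r - r ^ 3) / 8) ^ 2) : ℝ) := by
  set s : ℝ := r + x * (r - r ^ 3) / 8 with hs
  have hpos : (0:ℝ) < 1 - s ^ 2 := by nlinarith
  have e1 : ((r : ℂ) + (x:ℂ) * (((r - r ^ 3) / 8 : ℝ) : ℂ)) = (s : ℂ) := by
    rw [hs]; push_cast; ring
  have e2 : (1 - (s:ℂ) ^ 2) = ((1 - s ^ 2 : ℝ) : ℂ) := by push_cast; ring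
  have e3 : (-(1/2) : ℂ) = ((-(1/2) : ℝ) : ℂ) := by norm_num
  rw [show F r x = ((r : ℂ) + (x:ℂ) * (((r - r ^ 3) / 8 : ℝ) : ℂ)) *
      (1 - ((r : ℂ) + (x:ℂ) * (((r - r ^ 3) / 8 : ℝ) : ℂ)) ^ 2) ^ (-(1/2) : ℂ) from rfl,
    e1, e2, e3, ← Complex.ofReal_cpow hpos.le]
  rw [Real.rpow_neg hpos.le, ← Real.sqrt_eq_rpow]
  push_cast
  rw [div_eq_mul_inv]

/-- strict bound on `|s|` inside the complex disc of radius `8/(r+r²)`. -/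
lemma abs_lt_one {r : ℝ} (hr : r ∈ Ioo (0:ℝ) 1) {z : ℂ} (hz : ‖z‖ < 8 / (r + r ^ 2)) :
    ‖(r : ℂ) + z * (((r - r ^ 3) / 8 : ℝ) : ℂ)‖ < 1 := by
  obtain ⟨hr0, hr1⟩ := hr
  have hc : (0:ℝ) < (r - r ^ 3) / 8 := by nlinarith
  have hR : (0:ℝ) < r + r ^ 2 := by nlinarith
  have key : ‖z‖ * ((r - r ^ 3) / 8) < 1 - r := by
    have h1 : ‖z‖ * ((r - r ^ 3) / 8) < (8 / (r + r ^ 2)) * ((r - r ^ 3) / 8) :=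
      mul_lt_mul_of_pos_right hz hc
    have h2 : (8 / (r + r ^ 2)) * ((r - r ^ 3) / 8) = 1 - r := by
      field_simp; ring
    linarith
  calc ‖(r : ℂ) + z * (((r - r ^ 3) / 8 : ℝ) : ℂ)‖
      ≤ ‖(r:ℂ)‖ + ‖z * (((r - r ^ 3) / 8 : ℝ) : ℂ)‖ := norm_add_le _ _
    _ = r + ‖z‖ * ((r - r ^ 3) / 8) := by
        simp only [norm_mul, Complex.norm_real, Real.norm_eq_abs]
        rw [abs_of_pos hr0, abs_of_pos hc]
    _ < 1 := by linarith

/-- Cauchy power series for `F r` on any closed ball of radius `< 8/(r+r²)`. -/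
lemma Hps {r : ℝ} (hr : r ∈ Ioo (0:ℝ) 1) {R : NNReal} (h0 : 0 < R)
    (hR : (R : ℝ) < 8 / (r + r ^ 2)) :
    HasFPowerSeriesOnBall (F r) (cauchyPowerSeries (F r) 0 R) 0 R := by
  apply DifferentiableOn.hasFPowerSeriesOnBall _ h0
  intro z hz
  have hz' : ‖z‖ < 8 / (r + r ^ 2) := by
    rw [Metric.mem_closedBall, dist_zero_right] at hz
    exact lt_of_le_of_lt hz hR
  exact ((FanalyticAt r (abs_lt_one hr hz')).differentiableAt).differentiableWithinAt

/-- Realification of a complex power series. -/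
noncomputable def realify (p : FormalMultilinearSeries ℂ ℂ ℂ) : FormalMultilinearSeries ℝ ℝ ℝ :=
  fun n => Complex.reCLM.compContinuousMultilinearMap
    (((p n).restrictScalars ℝ).compContinuousLinearMap (fun _ => Complex.ofRealCLM))

lemma realify_apply (p : FormalMultilinearSeries ℂ ℂ ℂ) (n : ℕ) (y : ℝ) :
    realify p n (fun _ => y) = (p n (fun _ => (y:ℂ))).re := rfl

lemma realify_norm_le (p : FormalMultilinearSeries ℂ ℂ ℂ) (n : ℕ) :
    ‖realify p n‖ ≤ ‖p n‖ := by
  apply ContinuousMultilinearMap.opNorm_le_bound (norm_nonneg (p n))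
  intro m
  calc ‖realify p n m‖ ≤ ‖(p n) (fun i => ((m i : ℝ) : ℂ))‖ := by
        simpa [realify] using
          Complex.abs_re_le_norm ((p n) fun i => ((m i : ℝ):ℂ))
    _ ≤ ‖p n‖ * ∏ i, ‖((m i : ℝ) : ℂ)‖ := (p n).le_opNorm _
    _ = ‖p n‖ * ∏ i, ‖m i‖ := by simp

end Stmt14Aux

/-- For fixed `r ∈ (0,1)` the bubble slope `λ ↦ (r + λ(r-r³)/8)/√(1-(r + λ(r-r³)/8)²)`
is real-analytic on `(-8/(r(1-r)), 8/(r(1+r)))`; its Taylor series about `λ = 0`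
converges on `|λ| < 8/(r + r²)`; the infimum of `8/(r + r²)` over `r ∈ (0,1]` is `4`,
and `0 ≤ λ < 4` implies `|λ| < 8/(r + r²)` for all `r ∈ (0,1)`. -/
theorem stmt_14 :
    (∀ r : ℝ, r ∈ Ioo (0:ℝ) 1 →
      AnalyticOnNhd ℝ
        (fun lam : ℝ => (r + lam * (r - r ^ 3) / 8) /
          Real.sqrt (1 - (r + lam * (r - r ^ 3) / 8) ^ 2))
        (Ioo (-8 / (r * (1 - r))) (8 / (r * (1 + r)))) ∧
      ∃ p : FormalMultilinearSeries ℝ ℝ ℝ,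
        HasFPowerSeriesOnBall
          (fun lam : ℝ => (r + lam * (r - r ^ 3) / 8) /
            Real.sqrt (1 - (r + lam * (r - r ^ 3) / 8) ^ 2))
          p 0 (ENNReal.ofReal (8 / (r + r ^ 2)))) ∧
    IsGLB ((fun r : ℝ => 8 / (r + r ^ 2)) '' Ioc 0 1) 4 ∧
    (∀ lam : ℝ, 0 ≤ lam → lam < 4 →
      ∀ r ∈ Ioo (0:ℝ) 1, |lam| < 8 / (r + r ^ 2)) := by
  refine ⟨fun r hr => ?_, ⟨?_, ?_⟩, ?_⟩
  · obtain ⟨hr0, hr1⟩ := hr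
    have hr0' : r ≠ 0 := ne_of_gt hr0
    have h1r : (1:ℝ) - r ≠ 0 := ne_of_gt (by linarith)
    have h1r' : (1:ℝ) + r ≠ 0 := ne_of_gt (by linarith)
    have hc : (0:ℝ) < (r - r ^ 3) / 8 := by
      nlinarith [mul_pos (mul_pos hr0 (show (0:ℝ) < 1 - r by linarith))
        (show (0:ℝ) < 1 + r by linarith)]
    have hden : (0:ℝ) < r + r ^ 2 := by nlinarith
    have hRpos : (0:ℝ) < 8 / (r + r ^ 2) := div_pos (by norm_num) hden
    constructor
    · -- analyticity on the interval
      intro lam hlam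
      obtain ⟨hl1, hl2⟩ := hlam
      have hb1 : -1 < r + lam * (r - r ^ 3) / 8 := by
        have h1 : (-8 / (r * (1 - r))) * ((r - r ^ 3) / 8) = -(1 + r) := by
          field_simp; ring
        nlinarith [mul_lt_mul_of_pos_right hl1 hc]
      have hb2 : r + lam * (r - r ^ 3) / 8 < 1 := by
        have h1 : (8 / (r * (1 + r))) * ((r - r ^ 3) / 8) = 1 - r := by
          field_simp; ring
        nlinarith [mul_lt_mul_of_pos_right hl2 hc]
      have hF : AnalyticAt ℂ (Stmt14Aux.F r) ↑lam := by
        apply Stmt14Aux.FanalyticAt r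
        rw [show ((r:ℂ) + (lam:ℂ) * (((r - r ^ 3) / 8 : ℝ) : ℂ))
            = ((r + lam * (r - r ^ 3) / 8 : ℝ) : ℂ) by push_cast; ring,
          Complex.norm_real, Real.norm_eq_abs, abs_lt]
        exact ⟨hb1, hb2⟩
      have hA : AnalyticAt ℝ (fun x : ℝ => (Stmt14Aux.F r x).re) lam := by
        have h1 := Complex.ofRealCLM.analyticAt lam
        have h2 := (hF.restrictScalars (𝕜 := ℝ)).comp h1
        exact (Complex.reCLM.analyticAt _).comp h2
      apply hA.congr
      have hcont : Continuous fun x : ℝ => r + x * (r - r ^ 3) / 8 := by fun_prop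
      have ho : IsOpen {x : ℝ | -1 < r + x * (r - r ^ 3) / 8 ∧ r + x * (r - r ^ 3) / 8 < 1} :=
        isOpen_Ioo.preimage hcont
      filter_upwards [ho.mem_nhds ⟨hb1, hb2⟩] with x hx
      rw [Stmt14Aux.F_real r x hx.1 hx.2, Complex.ofReal_re]
    · -- existence of the power series on the ball
      set Rr := 8 / (r + r ^ 2) with hRr
      set ρ : NNReal := (Rr / 2).toNNReal with hρ
      have hρ0 : 0 < ρ := by
        rw [hρ]; exact Real.toNNReal_pos.mpr (by linarith)
      have hρR : (ρ : ℝ) < Rr := by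
        rw [hρ, Real.coe_toNNReal _ (by linarith)]; linarith
      set p := cauchyPowerSeries (Stmt14Aux.F r) 0 ρ with hp
      have hball : ∀ t : ℝ, 0 ≤ t → t < Rr →
          ∃ R : NNReal, t < (R : ℝ) ∧ (R : ℝ) < Rr ∧
            HasFPowerSeriesOnBall (Stmt14Aux.F r) p 0 R := by
        intro t ht htR
        have h1 : (0:ℝ) < (t + Rr) / 2 := by linarith
        refine ⟨((t + Rr) / 2).toNNReal, ?_, ?_, ?_⟩
        · rw [Real.coe_toNNReal _ h1.le]; linarith
        · rw [Real.coe_toNNReal _ h1.le]; linarith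
        · have h0 : 0 < ((t + Rr) / 2).toNNReal := Real.toNNReal_pos.mpr h1
          have hlt : (((t + Rr) / 2).toNNReal : ℝ) < Rr := by
            rw [Real.coe_toNNReal _ h1.le]; linarith
          have H1 := Stmt14Aux.Hps ⟨hr0, hr1⟩ h0 hlt
          have H2 := Stmt14Aux.Hps ⟨hr0, hr1⟩ hρ0 hρR
          have e : cauchyPowerSeries (Stmt14Aux.F r) 0 ((t + Rr) / 2).toNNReal = p :=
            H1.hasFPowerSeriesAt.eq_formalMultilinearSeries H2.hasFPowerSeriesAt
          exact e ▸ H1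
      refine ⟨Stmt14Aux.realify p, ?_, ?_, ?_⟩
      · -- radius bound
        have hle : p.radius ≤ (Stmt14Aux.realify p).radius :=
          FormalMultilinearSeries.radius_le_of_le fun n => Stmt14Aux.realify_norm_le p n
        refine le_trans ?_ hle
        apply ENNReal.le_of_forall_nnreal_lt
        intro t ht
        have ht' : (t : ℝ) < Rr := by
          rw [← ENNReal.ofReal_coe_nnreal] at ht
          exact (ENNReal.ofReal_lt_ofReal_iff hRpos).mp ht
        obtain ⟨R, htR, hRlt, hball'⟩ := hball t t.2 ht'
        exact le_trans (by exact_mod_cast htR.le) hball'.r_le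
      · exact ENNReal.ofReal_pos.mpr hRpos
      · -- convergence of the sum
        intro y hy
        have hy' : |y| < Rr := by
          rw [mem_emetric_ball_zero_iff, ← ofReal_norm] at hy
          have := (ENNReal.ofReal_lt_ofReal_iff hRpos).mp hy
          simpa [Real.norm_eq_abs] using this
        obtain ⟨R, htR, hRlt, hball'⟩ := hball |y| (abs_nonneg y) hy'
        have hmem : (y : ℂ) ∈ Metric.eball (0 : ℂ) R := by
          rw [Metric.emetric_ball_nnreal, Metric.mem_ball, dist_zero_right, Complex.norm_real,
            Real.norm_eq_abs]
          exact htR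
        have hs2 := Complex.reCLM.hasSum (hball'.hasSum hmem)
        simp only [zero_add] at hs2 ⊢
        have habs : |r + y * (r - r ^ 3) / 8| < 1 := by
          have h := Stmt14Aux.abs_lt_one ⟨hr0, hr1⟩ (z := (y:ℂ))
            (by rw [Complex.norm_real, Real.norm_eq_abs]; exact hy')
          rwa [show ((r:ℂ) + (y:ℂ) * (((r - r ^ 3) / 8 : ℝ) : ℂ))
              = ((r + y * (r - r ^ 3) / 8 : ℝ) : ℂ) by push_cast; ring,
            Complex.norm_real, Real.norm_eq_abs] at h
        obtain ⟨hb1, hb2⟩ := abs_lt.mp habs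
        have key : (r + y * (r - r ^ 3) / 8) /
            Real.sqrt (1 - (r + y * (r - r ^ 3) / 8) ^ 2) = (Stmt14Aux.F r (y:ℂ)).re := by
          rw [Stmt14Aux.F_real r y hb1 hb2, Complex.ofReal_re]
        rw [show (fun n => (Stmt14Aux.realify p) n fun _ => y)
            = fun n => Complex.reCLM ((p n) fun _ => (y:ℂ)) from
            funext fun n => Stmt14Aux.realify_apply p n y, key]
        exact hs2
  · rintro x ⟨s, hs, rfl⟩
    have h1 : (0:ℝ) < s + s ^ 2 := by nlinarith [hs.1]
    rw [le_div_iff₀ h1]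
    nlinarith [hs.1, hs.2]
  · intro b hb
    exact hb ⟨1, ⟨by norm_num, le_refl 1⟩, by norm_num⟩
  · intro lam h0 h4 r hr
    rw [abs_of_nonneg h0]
    have h1 : (0:ℝ) < r + r ^ 2 := by nlinarith [hr.1]
    rw [lt_div_iff₀ h1]
    nlinarith [hr.1, hr.2, mul_le_mul_of_nonneg_left
      (show r + r ^ 2 ≤ 2 by nlinarith [hr.1, hr.2]) h0]
end

section
/- For every λ with 0 ≤ λ < 4: 2·∫₀¹ f(r,λ)/√(1 − f(r,λ)²) dr = Σ_{p=0}^∞ C_p λ^p, where f(r,λ) = r + (λ/8)(r − r³) and C_p = (1/√π)·8^{−p}·Σ_{m ≥ m₀(p)} Γ(m + 1/2)·Γ(2m + 2) / ( Γ(2m + 2 − p)·Γ(m + p + 2) ), with m₀(p) the smallest natural number m satisfying 2m + 1 ≥ p. In particular C₀ = 2. -/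
open Real Finset Nat MeasureTheory intervalIntegral


lemma wsum_centralBinom (n : ℕ) :
    ∑ i ∈ Finset.range (n+1), 2*i * (Nat.centralBinom i * Nat.centralBinom (n - i))
      = n * ∑ i ∈ Finset.range (n+1), Nat.centralBinom i * Nat.centralBinom (n - i) := by
  have key : (∑ i ∈ Finset.range (n+1), 2*i * (Nat.centralBinom i * Nat.centralBinom (n - i)))
      + ∑ i ∈ Finset.range (n+1), 2*i * (Nat.centralBinom i * Nat.centralBinom (n - i))
      = 2 * (n * ∑ i ∈ Finset.range (n+1), Nat.centralBinom i * Nat.centralBinom (n - i)) := by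
    nth_rewrite 2 [← Finset.sum_range_reflect]
    rw [Finset.mul_sum, Finset.mul_sum, ← Finset.sum_add_distrib]
    apply Finset.sum_congr rfl
    intro j hj
    have hj' : j ≤ n := Nat.lt_succ_iff.mp (Finset.mem_range.mp hj)
    simp only [Nat.add_sub_cancel]
    rw [Nat.sub_sub_self hj', mul_comm (Nat.centralBinom (n - j)) (Nat.centralBinom j),
      ← Nat.add_mul]
    rw [show 2*(n * (Nat.centralBinom j * Nat.centralBinom (n-j)))
      = (2*n) * (Nat.centralBinom j * Nat.centralBinom (n-j)) from by ring]
    congr 1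
    omega
  omega

lemma centralBinom_conv (m : ℕ) :
    ∑ i ∈ Finset.range (m+1), Nat.centralBinom i * Nat.centralBinom (m - i) = 4 ^ m := by
  induction m with
  | zero => simp [Nat.centralBinom]
  | succ m ih =>
    have h1 := wsum_centralBinom (m+1)
    rw [Finset.sum_range_succ'] at h1
    simp only [Nat.mul_zero, Nat.zero_mul, add_zero, Nat.add_sub_add_right] at h1
    have h2 : ∀ j, 2*(j+1) * (Nat.centralBinom (j+1) * Nat.centralBinom (m - j))
        = 8*j * (Nat.centralBinom j * Nat.centralBinom (m - j))
          + 4 * (Nat.centralBinom j * Nat.centralBinom (m - j)) := by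
      intro j
      rw [show 2*(j+1) * (Nat.centralBinom (j+1) * Nat.centralBinom (m - j))
        = ((j+1) * Nat.centralBinom (j+1)) * (2 * Nat.centralBinom (m-j)) from by ring,
        Nat.succ_mul_centralBinom_succ]
      ring
    rw [Finset.sum_congr rfl (fun j _ => h2 j), Finset.sum_add_distrib] at h1
    have h3 : ∑ j ∈ Finset.range (m+1), 8*j * (Nat.centralBinom j * Nat.centralBinom (m - j))
        = 4 * ∑ i ∈ Finset.range (m+1), 2*i * (Nat.centralBinom i * Nat.centralBinom (m - i)) := by
      rw [Finset.mul_sum]; apply Finset.sum_congr rfl; intro j _; ring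
    rw [h3, wsum_centralBinom m, ← Finset.mul_sum, ih] at h1
    have h4 : (m+1) * ∑ i ∈ Finset.range (m+1+1), Nat.centralBinom i * Nat.centralBinom (m+1 - i)
        = (m+1) * 4^(m+1) := by rw [← h1, pow_succ]; ring
    exact Nat.eq_of_mul_eq_mul_left (Nat.succ_pos m) h4

lemma centralBinom_le_four_pow' (m : ℕ) : Nat.centralBinom m ≤ 4 ^ m := by
  have h := centralBinom_conv m
  calc Nat.centralBinom m = Nat.centralBinom m * Nat.centralBinom (m - m) := by
        simp [Nat.centralBinom]
    _ ≤ ∑ i ∈ Finset.range (m+1), Nat.centralBinom i * Nat.centralBinom (m - i) :=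
        Finset.single_le_sum (f := fun i => Nat.centralBinom i * Nat.centralBinom (m - i))
          (fun i _ => Nat.zero_le _) (Finset.self_mem_range_succ m)
    _ = 4 ^ m := h

lemma a_le_one (m : ℕ) : (Nat.centralBinom m : ℝ) / 4 ^ m ≤ 1 := by
  rw [div_le_one (by positivity)]
  exact_mod_cast centralBinom_le_four_pow' m

lemma a_nonneg (m : ℕ) : 0 ≤ (Nat.centralBinom m : ℝ) / 4 ^ m := by positivity

lemma summable_a_mul_pow {y : ℝ} (h0 : 0 ≤ y) (h1 : y < 1) :
    Summable (fun m => (Nat.centralBinom m : ℝ) / 4 ^ m * y ^ m) := by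
  apply Summable.of_nonneg_of_le (fun m => by positivity)
    (fun m => ?_) (summable_geometric_of_lt_one h0 h1)
  calc (Nat.centralBinom m : ℝ) / 4 ^ m * y ^ m ≤ 1 * y ^ m := by
        apply mul_le_mul_of_nonneg_right (a_le_one m) (by positivity)
    _ = y ^ m := one_mul _

lemma hasSum_one_div_sqrt_one_sub {y : ℝ} (h0 : 0 ≤ y) (h1 : y < 1) :
    HasSum (fun m => (Nat.centralBinom m : ℝ) / 4 ^ m * y ^ m) (1 / Real.sqrt (1 - y)) := by
  set a : ℕ → ℝ := fun m => (Nat.centralBinom m : ℝ) / 4 ^ m * y ^ m with ha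
  have hs : Summable a := summable_a_mul_pow h0 h1
  have hnorm : Summable (fun m => ‖a m‖) := by
    have : ∀ m, ‖a m‖ = a m := fun m => Real.norm_of_nonneg (by simp only [ha]; positivity)
    rw [funext this]; exact hs
  have hsq : (∑' m, a m) * (∑' m, a m) = (1 - y)⁻¹ := by
    rw [tsum_mul_tsum_eq_tsum_sum_range_of_summable_norm hnorm hnorm]
    have : ∀ n : ℕ, ∑ k ∈ Finset.range (n+1), a k * a (n - k) = y ^ n := by
      intro n
      have : ∀ k ∈ Finset.range (n+1), a k * a (n - k)
          = (Nat.centralBinom k * Nat.centralBinom (n-k) : ℕ) * (y ^ n / 4 ^ n) := by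
        intro k hk
        have hk' : k ≤ n := Nat.lt_succ_iff.mp (Finset.mem_range.mp hk)
        have e4 : (4:ℝ) ^ k * 4 ^ (n - k) = 4 ^ n := by
          rw [← pow_add]; congr 1; omega
        have ey : y ^ k * y ^ (n - k) = y ^ n := by
          rw [← pow_add]; congr 1; omega
        simp only [ha]
        push_cast
        field_simp
        rw [← ey, ← e4]
        ring
      rw [Finset.sum_congr rfl this, ← Finset.sum_mul, ← Nat.cast_sum, centralBinom_conv]
      push_cast
      field_simp
    rw [tsum_congr this, tsum_geometric_of_lt_one h0 h1]
  have hSnn : 0 ≤ ∑' m, a m := tsum_nonneg (fun m => by positivity)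
  have hval : (∑' m, a m) = 1 / Real.sqrt (1 - y) := by
    have h1y : 0 < 1 - y := by linarith
    rw [one_div, ← Real.sqrt_inv]
    rw [show (∑' m, a m) = Real.sqrt ((∑' m, a m) * (∑' m, a m)) from
      (Real.sqrt_mul_self hSnn).symm, hsq]
  exact (Summable.hasSum_iff hs).mpr hval

lemma J_val (p : ℕ) : ∀ m : ℕ, ∫ r in (0:ℝ)..1, r^(2*m+1) * (1-r^2)^p
    = (m.factorial * p.factorial : ℝ) / (2 * (m+p+1).factorial) := by
  induction p with
  | zero =>
    intro m
    simp only [pow_zero, mul_one, integral_pow, Nat.factorial]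
    rw [one_pow]
    have : (0:ℝ) ^ (2*m+1+1) = 0 := zero_pow (by omega)
    rw [this]
    push_cast [Nat.factorial_succ]
    field_simp
    ring
  | succ p ih =>
    intro m
    -- integration by parts
    have key : (2*(m:ℝ)+2) * ∫ r in (0:ℝ)..1, r^(2*m+1) * (1-r^2)^(p+1)
        = 2*((p:ℝ)+1) * ∫ r in (0:ℝ)..1, r^(2*(m+1)+1) * (1-r^2)^p := by
      have hu : ∀ x ∈ Set.uIcc (0:ℝ) 1, HasDerivAt (fun y : ℝ => y^(2*m+2))
          ((2*(m:ℝ)+2) * x^(2*m+1)) x := by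
        intro x _
        have := hasDerivAt_pow (2*m+2) x
        refine this.congr_deriv ?_
        push_cast
        ring_nf
      have hv : ∀ x ∈ Set.uIcc (0:ℝ) 1, HasDerivAt (fun y : ℝ => (1-y^2)^(p+1))
          (((p:ℝ)+1) * (1-x^2)^p * (-(2*x))) x := by
        intro x _
        have h1 : HasDerivAt (fun y : ℝ => 1 - y^2) (-(2*x)) x := by
          simpa using ((hasDerivAt_pow 2 x).const_sub 1)
        have h2 := (hasDerivAt_pow (p+1) (1 - x^2)).comp x h1
        refine h2.congr_deriv ?_
        push_cast
        ring
      have hint1 : IntervalIntegrable (fun x : ℝ => (2*(m:ℝ)+2) * x^(2*m+1))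
          MeasureTheory.volume 0 1 := (by fun_prop : Continuous fun x : ℝ =>
            (2*(m:ℝ)+2) * x^(2*m+1)).intervalIntegrable 0 1
      have hint2 : IntervalIntegrable (fun x : ℝ => ((p:ℝ)+1) * (1-x^2)^p * (-(2*x)))
          MeasureTheory.volume 0 1 := (by fun_prop : Continuous fun x : ℝ =>
            ((p:ℝ)+1) * (1-x^2)^p * (-(2*x))).intervalIntegrable 0 1
      have hparts := integral_mul_deriv_eq_deriv_mul hu hv hint1 hint2
      -- hparts : ∫ u v' = u 1 * v 1 - u 0 * v 0 - ∫ u' v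
      have e1 : (∫ x in (0:ℝ)..1, x^(2*m+2) * (((p:ℝ)+1) * (1-x^2)^p * (-(2*x))))
          = -(2*((p:ℝ)+1)) * ∫ x in (0:ℝ)..1, x^(2*(m+1)+1) * (1-x^2)^p := by
        rw [← intervalIntegral.integral_const_mul]
        apply integral_congr
        intro x _
        ring_nf
      have e2 : (∫ x in (0:ℝ)..1, (2*(m:ℝ)+2) * x^(2*m+1) * (1-x^2)^(p+1))
          = (2*(m:ℝ)+2) * ∫ x in (0:ℝ)..1, x^(2*m+1) * (1-x^2)^(p+1) := by
        rw [← intervalIntegral.integral_const_mul]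
        apply integral_congr
        intro x _
        ring
      rw [e1, e2] at hparts
      have hz : (1:ℝ)^(2*m+2) * (1-(1:ℝ)^2)^(p+1) - (0:ℝ)^(2*m+2) * (1-(0:ℝ)^2)^(p+1) = 0 := by
        norm_num
      rw [hz] at hparts  -- may not match; adjust below
      linarith [hparts]
    have ihm := ih (m+1)
    have hm2 : (2*(m:ℝ)+2) ≠ 0 := by positivity
    have : (∫ r in (0:ℝ)..1, r^(2*m+1) * (1-r^2)^(p+1))
        = 2*((p:ℝ)+1) * ((((m+1).factorial : ℝ) * p.factorial) / (2 * ((m+1)+p+1).factorial)) / (2*(m:ℝ)+2) := by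
      rw [← ihm]
      field_simp at key ⊢
      linarith [key]
    rw [this]
    have hfact : (((m+1).factorial : ℝ)) = (m+1) * m.factorial := by
      push_cast [Nat.factorial_succ]; ring
    have hfact2 : ((p+1).factorial : ℝ) = (p+1) * p.factorial := by
      push_cast [Nat.factorial_succ]; ring
    have hfact3 : ((m+(p+1)+1).factorial : ℝ) = (((m+1)+p+1).factorial : ℝ) := by
      norm_num; ring_nf
    rw [hfact, hfact2, hfact3]
    have : ((((m+1)+p+1).factorial : ℝ)) > 0 := by positivity
    field_simp

lemma centralBinom_sq_bound (m : ℕ) :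
    ((Nat.centralBinom m : ℝ))^2 * (2*m+1) ≤ 16^m := by
  induction m with
  | zero => norm_num [Nat.centralBinom]
  | succ m ih =>
    have e : ((m:ℝ)+1) * (Nat.centralBinom (m+1) : ℝ) = 2*(2*m+1) * Nat.centralBinom m := by
      have := Nat.succ_mul_centralBinom_succ m
      have h := congrArg (fun n : ℕ => (n : ℝ)) this
      push_cast at h
      linarith [h]
    have hm1 : (0:ℝ) < ((m:ℝ)+1)^2 := by positivity
    have e2 : ((m:ℝ)+1)^2 * (Nat.centralBinom (m+1) : ℝ)^2
        = 4*(2*(m:ℝ)+1)^2 * (Nat.centralBinom m : ℝ)^2 := by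
      rw [show ((m:ℝ)+1)^2 * (Nat.centralBinom (m+1) : ℝ)^2
        = (((m:ℝ)+1) * (Nat.centralBinom (m+1) : ℝ))^2 from by ring, e]
      ring
    have goal2 : ((m:ℝ)+1)^2 * ((Nat.centralBinom (m+1) : ℝ)^2 * (2*(m+1)+1))
        ≤ ((m:ℝ)+1)^2 * 16^(m+1) := by
      have h16 : (16:ℝ)^(m+1) = 16 * 16^m := by ring
      have hcb : (0:ℝ) ≤ (Nat.centralBinom m : ℝ)^2 := by positivity
      have key : (2*(m:ℝ)+1)*(2*m+3) ≤ 4*((m:ℝ)+1)^2 := by nlinarith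
      have h16m : (0:ℝ) < 16^m := by positivity
      push_cast
      nlinarith [ih, e2, hcb, h16m, mul_le_mul_of_nonneg_right key hcb]
    have goal3 := le_of_mul_le_mul_left goal2 hm1
    push_cast at goal3 ⊢
    linarith [goal3]
lemma a_le_inv_sqrt (m : ℕ) :
    (Nat.centralBinom m : ℝ) / 4^m ≤ 1 / Real.sqrt (m+1) := by
  have h1 : ((Nat.centralBinom m : ℝ)/4^m)^2 ≤ 1/((m:ℝ)+1) := by
    have hb := centralBinom_sq_bound m
    have h16 : ((4:ℝ)^m)^2 = 16^m := by
      rw [← pow_mul, mul_comm, pow_mul]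
      norm_num
    have hm : (0:ℝ) < (m:ℝ)+1 := by positivity
    have h2m : ((m:ℝ)+1) ≤ 2*m+1 := by push_cast; linarith
    rw [div_pow, h16, div_le_div_iff₀ (by positivity) hm]
    nlinarith [hb, mul_le_mul_of_nonneg_left h2m (sq_nonneg ((Nat.centralBinom m : ℝ)))]
  have ha : (0:ℝ) ≤ (Nat.centralBinom m : ℝ)/4^m := by positivity
  calc (Nat.centralBinom m : ℝ)/4^m = Real.sqrt (((Nat.centralBinom m : ℝ)/4^m)^2) :=
        (Real.sqrt_sq ha).symm
    _ ≤ Real.sqrt (1/((m:ℝ)+1)) := Real.sqrt_le_sqrt h1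
    _ = 1 / Real.sqrt ((m:ℝ)+1) := by rw [one_div, Real.sqrt_inv, one_div]

lemma summable_bound : Summable (fun m : ℕ => 1/(((m:ℝ)+1) * Real.sqrt ((m:ℝ)+1))) := by
  have h : ∀ m : ℕ, 1/(((m:ℝ)+1) * Real.sqrt ((m:ℝ)+1)) = 1/((m+1:ℕ):ℝ)^(3/2:ℝ) := by
    intro m
    have hm : (0:ℝ) ≤ (m:ℝ)+1 := by positivity
    rw [show (3/2:ℝ) = 1 + 1/2 by norm_num, Real.rpow_add (by positivity), Real.rpow_one,
      ← Real.sqrt_eq_rpow]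
    push_cast
    ring_nf
  rw [funext h]
  have base : Summable (fun n : ℕ => 1/(n:ℝ)^(3/2:ℝ)) :=
    Real.summable_one_div_nat_rpow.mpr (by norm_num)
  exact (summable_nat_add_iff 1).mpr base

lemma Gamma_half (m : ℕ) : Real.Gamma ((m:ℝ) + 1/2)
    = Real.sqrt π * (Nat.centralBinom m : ℝ) * m.factorial / 4^m := by
  induction m with
  | zero =>
    rw [show ((0:ℕ):ℝ)+1/2 = 1/2 by norm_num, Real.Gamma_one_half_eq]
    simp [Nat.centralBinom]
  | succ m ih =>
    have h0 : ((m:ℝ) + 1/2) ≠ 0 := by positivity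
    have : ((m+1:ℕ):ℝ) + 1/2 = ((m:ℝ) + 1/2) + 1 := by push_cast; ring
    rw [this, Real.Gamma_add_one h0, ih]
    have e : ((m:ℝ)+1) * (Nat.centralBinom (m+1) : ℝ) = 2*(2*m+1) * Nat.centralBinom m := by
      have h := congrArg (fun n : ℕ => (n : ℝ)) (Nat.succ_mul_centralBinom_succ m)
      push_cast at h
      linarith [h]
    have hf : ((m+1).factorial : ℝ) = ((m:ℝ)+1) * m.factorial := by
      push_cast [Nat.factorial_succ]; ring
    have h4 : (4:ℝ)^(m+1) = 4 * 4^m := by ring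
    rw [hf, h4]
    have h4m : ((4:ℝ)^m) ≠ 0 := by positivity
    field_simp
    linear_combination (-2) * e

lemma iint_arc : IntervalIntegrable (fun r : ℝ => r / Real.sqrt (1 - r^2))
    MeasureTheory.volume 0 1 := by
  have h1 : IntervalIntegrable (fun x : ℝ => x ^ (-(1/2) : ℝ)) MeasureTheory.volume 0 1 :=
    intervalIntegrable_rpow' (by norm_num)
  have h2 : IntervalIntegrable (fun x : ℝ => (1 - x) ^ (-(1/2) : ℝ)) MeasureTheory.volume 0 1 := by
    have := (intervalIntegrable_rpow' (r := -(1/2)) (by norm_num) (a := 0) (b := 1)).comp_sub_left 1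
    exact (by simpa using this : IntervalIntegrable (fun x : ℝ => (1 - x) ^ (-(1/2) : ℝ)) MeasureTheory.volume 1 0).symm
  apply h2.mono_fun
  · apply Measurable.aestronglyMeasurable
    apply Measurable.div measurable_id
    exact (Real.continuous_sqrt.measurable).comp (by fun_prop)
  · rw [Filter.EventuallyLE, ae_restrict_iff' measurableSet_uIoc]
    filter_upwards with r hr
    rw [Set.uIoc_of_le (by norm_num : (0:ℝ) ≤ 1)] at hr
    obtain ⟨hr0, hr1⟩ := hr
    have h1r : 0 ≤ 1 - r := by linarith
    simp only [Real.norm_eq_abs]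
    rw [abs_of_nonneg (by positivity : (0:ℝ) ≤ (1-r) ^ (-(1/2):ℝ))]
    rw [abs_of_nonneg (by positivity : (0:ℝ) ≤ r / Real.sqrt (1 - r^2))]
    rcases eq_or_lt_of_le hr1 with h | h
    · subst h
      rw [show (1:ℝ)-1^2 = 0 by ring, Real.sqrt_zero, show (1:ℝ)-1 = 0 by ring,
        Real.zero_rpow (by norm_num)]
      norm_num
    · have hpos : 0 < 1 - r := by linarith
      have hsq : Real.sqrt (1 - r^2) ≥ Real.sqrt (1 - r) := by
        apply Real.sqrt_le_sqrt
        nlinarith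
      have hs : 0 < Real.sqrt (1 - r) := Real.sqrt_pos.mpr hpos
      calc r / Real.sqrt (1 - r^2) ≤ 1 / Real.sqrt (1 - r) := by
            exact div_le_div₀ (by norm_num) hr1 hs hsq
        _ = (1-r) ^ (-(1/2):ℝ) := by
            rw [Real.rpow_neg h1r, Real.sqrt_eq_rpow, one_div]

lemma arc_integral : ∫ r in (0:ℝ)..1, r / Real.sqrt (1 - r^2) = 1 := by
  have key := intervalIntegral.integral_eq_sub_of_hasDeriv_right_of_le (f := fun x => -Real.sqrt (1 - x^2))
    (f' := fun r : ℝ => r / Real.sqrt (1 - r^2)) (by norm_num : (0:ℝ) ≤ 1)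
    ?_ ?_ iint_arc
  · rw [key]
    norm_num
  · apply ContinuousOn.neg
    apply Continuous.comp_continuousOn Real.continuous_sqrt
    fun_prop
  · intro x hx
    obtain ⟨hx0, hx1⟩ := hx
    have hpos : 0 < 1 - x^2 := by nlinarith
    have hd : HasDerivAt (fun y : ℝ => -Real.sqrt (1 - y^2)) (x / Real.sqrt (1 - x^2)) x := by
      have h1 : HasDerivAt (fun y : ℝ => 1 - y^2) (-(2*x)) x := by
        simpa using ((hasDerivAt_pow 2 x).const_sub 1)
      have h2 := (Real.hasDerivAt_sqrt (ne_of_gt hpos)).comp x h1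
      have h3 := h2.neg
      refine h3.congr_deriv ?_
      field_simp
    exact (hd.hasDerivWithinAt)

-- expansion of the integral of f^(2m+1)
lemma int_f_pow (m : ℕ) (t : ℝ) : ∫ r in (0:ℝ)..1, (r + t*(r - r^3))^(2*m+1)
    = ∑ p ∈ Finset.range (2*m+2), (Nat.choose (2*m+1) p : ℝ) * t^p
        * ((m.factorial * p.factorial : ℝ)/(2*(m+p+1).factorial)) := by
  have expand : Set.EqOn (fun r : ℝ => (r + t*(r - r^3))^(2*m+1))
      (fun r : ℝ => ∑ p ∈ Finset.range (2*m+2),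
        (Nat.choose (2*m+1) p : ℝ) * t^p * (r^(2*m+1) * (1-r^2)^p)) (Set.uIcc 0 1) := by
    intro r _
    simp only
    have h1 : r + t*(r - r^3) = r * (t*(1-r^2) + 1) := by ring
    rw [h1, mul_pow, add_pow]
    rw [Finset.mul_sum]
    apply Finset.sum_congr rfl
    intro p hp
    rw [mul_pow]
    ring
  rw [intervalIntegral.integral_congr expand,
    intervalIntegral.integral_finset_sum (fun p _ => ((by fun_prop : Continuous fun r : ℝ =>
      (Nat.choose (2*m+1) p : ℝ) * t^p * (r^(2*m+1) * (1-r^2)^p)).intervalIntegrable 0 1))]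
  exact Finset.sum_congr rfl fun p _ => by
    rw [intervalIntegral.integral_const_mul, J_val]

lemma f_nonneg {t r : ℝ} (ht0 : 0 ≤ t) (hr0 : 0 ≤ r) (hr1 : r ≤ 1) :
    0 ≤ r + t*(r - r^3) := by
  have h : 0 ≤ t*(r*((1-r)*(1+r))) :=
    mul_nonneg ht0 (mul_nonneg hr0 (mul_nonneg (by linarith) (by linarith)))
  nlinarith [h]

lemma f_lt_one {t r : ℝ} (ht0 : 0 ≤ t) (ht : t < 1/2) (hr0 : 0 ≤ r) (hr1 : r < 1) :
    r + t*(r - r^3) < 1 := by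
  have h2 : r*(1+r) ≤ 2 := by nlinarith
  have h3 : t*(r*(1+r)) ≤ t*2 := mul_le_mul_of_nonneg_left h2 ht0
  have h4 : 0 < 1 - t*(r*(1+r)) := by linarith
  have h5 : 0 < (1-r) * (1 - t*(r*(1+r))) := mul_pos (by linarith) h4
  nlinarith [h5]

lemma hasSum_pointwise {t r : ℝ} (ht0 : 0 ≤ t) (ht : t < 1/2) (hr0 : 0 ≤ r) (hr1 : r < 1) :
    HasSum (fun m => (Nat.centralBinom m : ℝ)/4^m * (r + t*(r - r^3))^(2*m+1))
      ((r + t*(r - r^3)) / Real.sqrt (1 - (r + t*(r - r^3))^2)) := by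
  set u := r + t*(r - r^3) with hu
  have hu0 : 0 ≤ u := f_nonneg ht0 hr0 (le_of_lt hr1)
  have hu1 : u < 1 := f_lt_one ht0 ht hr0 hr1
  have hy : u^2 < 1 := by nlinarith
  have h := (hasSum_one_div_sqrt_one_sub (by positivity) hy).mul_left u
  convert h using 1
  · rfl
  · funext m
    rw [← pow_mul]
    have : u ^ (2*m+1) = u * u^(2*m) := by rw [pow_succ]; ring
    rw [this]
    ring
  · rw [div_eq_mul_one_div]

lemma pow_f_le {t r : ℝ} (ht0 : 0 ≤ t) (ht : t < 1/2) (hr0 : 0 ≤ r) (hr1 : r ≤ 1) (m : ℕ) :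
    (r + t*(r - r^3))^(2*m+1) ≤ (1+t) * (1-(1-2*t)*(1-r))^m := by
  set B := 1 + t*(1-r^2) with hB
  have hr2 : 0 ≤ 1 - r^2 := by nlinarith [mul_nonneg (sub_nonneg.mpr hr1) (by linarith : (0:ℝ) ≤ 1+r)]
  have hB1 : 1 ≤ B := by have := mul_nonneg ht0 hr2; rw [hB]; linarith
  have hB2 : B ≤ 1 + t := by
    have h1 : 1 - r^2 ≤ 1 := by nlinarith [sq_nonneg r]
    have := mul_le_mul_of_nonneg_left h1 ht0
    rw [hB]; linarith
  have hrB : r + t*(r-r^3) = r * B := by rw [hB]; ring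
  have hrB0 : 0 ≤ r * B := mul_nonneg hr0 (by linarith)
  have hrB1 : r * B ≤ 1 + t := by nlinarith
  have hsq : (r*B)^2 ≤ 1-(1-2*t)*(1-r) := by
    have key : 1-(1-2*t)*(1-r^2) - (r*B)^2 = (1-r^2)^2*(2*t-t^2) + t^2*(1-r^2)^3 := by
      rw [hB]; ring
    have h2t : 0 ≤ 2*t - t^2 := by nlinarith [mul_le_mul_of_nonneg_left (le_of_lt ht) ht0]
    have h1 : 0 ≤ (1-r^2)^2*(2*t-t^2) := mul_nonneg (sq_nonneg _) h2t
    have h2 : 0 ≤ t^2*(1-r^2)^3 := mul_nonneg (sq_nonneg _) (pow_nonneg hr2 3)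
    have h3 : (r*B)^2 ≤ 1-(1-2*t)*(1-r^2) := by linarith
    have h4 : 1-(1-2*t)*(1-r^2) ≤ 1-(1-2*t)*(1-r) := by
      have hrr : 1-r ≤ 1-r^2 := by nlinarith [mul_nonneg hr0 (sub_nonneg.mpr hr1)]
      have := mul_le_mul_of_nonneg_left hrr (by linarith : (0:ℝ) ≤ 1-2*t)
      linarith
    linarith
  have hw0 : 0 ≤ 1-(1-2*t)*(1-r) := le_trans (sq_nonneg _) hsq
  calc (r + t*(r-r^3))^(2*m+1) = (r*B) * ((r*B)^2)^m := by
        rw [hrB, ← pow_mul, pow_succ]; ring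
    _ ≤ (1+t) * (1-(1-2*t)*(1-r))^m := by
        apply mul_le_mul hrB1 (pow_le_pow_left₀ (sq_nonneg _) hsq m)
          (pow_nonneg (sq_nonneg _) m) (by linarith)

lemma int_w_pow {c : ℝ} (hc : 0 < c) (hc1 : c ≤ 1) (m : ℕ) :
    ∫ r in (0:ℝ)..1, (1-c*(1-r))^m ≤ 1/(c*(m+1)) := by
  have hderiv : ∀ x ∈ Set.uIcc (0:ℝ) 1, HasDerivAt
      (fun y : ℝ => (1-c*(1-y))^(m+1) / (c*(m+1))) ((1-c*(1-x))^m) x := by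
    intro x _
    have h1 : HasDerivAt (fun y : ℝ => 1-c*(1-y)) c x := by
      have hfun : (fun y : ℝ => 1-c*(1-y)) = (fun y : ℝ => c*y + (1-c)) := by
        funext y; ring
      rw [hfun]
      simpa using ((hasDerivAt_id x).const_mul c).add_const (1-c)
    have h2 := ((hasDerivAt_pow (m+1) (1-c*(1-x))).comp x h1).div_const (c*(m+1))
    refine h2.congr_deriv ?_
    have : (c*((m:ℝ)+1)) ≠ 0 := by positivity
    field_simp
    simp only [Nat.add_sub_cancel, Nat.add_sub_cancel_left, Nat.cast_add, Nat.cast_one]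
  have := intervalIntegral.integral_eq_sub_of_hasDerivAt hderiv
    ((by fun_prop : Continuous fun x : ℝ => (1-c*(1-x))^m).intervalIntegrable 0 1)
  rw [this]
  have h1 : (1-c*(1-(1:ℝ))) = 1 := by ring
  have h0 : (1-c*(1-(0:ℝ))) = 1 - c := by ring
  rw [h1, h0, one_pow]
  have hnn : 0 ≤ (1-c)^(m+1) := pow_nonneg (by linarith) (m+1)
  have hpos : 0 < c*((m:ℝ)+1) := by positivity
  rw [div_sub_div_same, div_le_div_iff₀ hpos hpos]
  push_cast
  nlinarith [hnn, hpos]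

noncomputable def bfun (t : ℝ) (m p : ℕ) : ℝ :=
  if p ≤ 2*m+1 then (Nat.centralBinom m : ℝ)/4^m * ((Nat.choose (2*m+1) p : ℝ) * t^p
    * ((m.factorial * p.factorial : ℝ)/(2*(m+p+1).factorial))) else 0

lemma bfun_nonneg {t : ℝ} (ht0 : 0 ≤ t) (m p : ℕ) : 0 ≤ bfun t m p := by
  unfold bfun
  split
  · positivity
  · exact le_refl 0

lemma coeff_eq {lam : ℝ} (p m : ℕ) (hpm : p ≤ 2*m+1) :
    2 * bfun (lam/8) m p
    = ((1/Real.sqrt π)*(1/(8:ℝ)^p)) * (Real.Gamma ((m:ℝ)+1/2) * Real.Gamma (2*(m:ℝ)+2)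
      / (Real.Gamma (2*(m:ℝ)+2-(p:ℝ)) * Real.Gamma ((m:ℝ)+(p:ℝ)+2)) * lam^p) := by
  have hG1 : Real.Gamma (2*(m:ℝ)+2) = ((2*m+1).factorial : ℝ) := by
    rw [show 2*(m:ℝ)+2 = ((2*m+1:ℕ):ℝ)+1 by push_cast; ring, Real.Gamma_nat_eq_factorial]
  have hG2 : Real.Gamma (2*(m:ℝ)+2-(p:ℝ)) = ((2*m+1-p).factorial:ℝ) := by
    rw [show 2*(m:ℝ)+2-(p:ℝ) = ((2*m+1-p:ℕ):ℝ)+1 by push_cast [Nat.cast_sub hpm]; ring,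
      Real.Gamma_nat_eq_factorial]
  have hG3 : Real.Gamma ((m:ℝ)+(p:ℝ)+2) = ((m+p+1).factorial : ℝ) := by
    rw [show (m:ℝ)+(p:ℝ)+2 = ((m+p+1:ℕ):ℝ)+1 by push_cast; ring, Real.Gamma_nat_eq_factorial]
  rw [hG1, hG2, hG3, Gamma_half, bfun, if_pos hpm, Nat.cast_choose ℝ hpm, div_pow]
  have hsp : Real.sqrt π ≠ 0 := by positivity
  have h1 : ((2*m+1-p).factorial : ℝ) ≠ 0 := by positivity
  have h2 : ((m+p+1).factorial : ℝ) ≠ 0 := by positivity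
  have h3 : (p.factorial : ℝ) ≠ 0 := by positivity
  have h4 : ((2*m+1).factorial : ℝ) ≠ 0 := by positivity
  have h5 : (m.factorial : ℝ) ≠ 0 := by positivity
  have h6 : ((4:ℝ)^m) ≠ 0 := by positivity
  have h7 : ((8:ℝ)^p) ≠ 0 := by positivity
  field_simp

theorem main_part1 (m₀ : ℕ → ℕ)
    (hm₀ : ∀ p : ℕ, IsLeast {m : ℕ | p ≤ 2 * m + 1} (m₀ p))
    (C : ℕ → ℝ)
    (hC : ∀ p : ℕ, C p =
      (1 / Real.sqrt π) * (1 / (8:ℝ) ^ p) *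
        ∑' k : ℕ,
          Real.Gamma (((m₀ p + k : ℕ) : ℝ) + 1 / 2)
            * Real.Gamma (2 * ((m₀ p + k : ℕ) : ℝ) + 2)
            / (Real.Gamma (2 * ((m₀ p + k : ℕ) : ℝ) + 2 - (p : ℝ))
              * Real.Gamma (((m₀ p + k : ℕ) : ℝ) + (p : ℝ) + 2)))
    (lam : ℝ) (hl0 : 0 ≤ lam) (hl4 : lam < 4) :
    HasSum (fun p : ℕ => C p * lam ^ p)
      (2 * ∫ r in (0:ℝ)..1,
        (r + lam / 8 * (r - r ^ 3)) /
          Real.sqrt (1 - (r + lam / 8 * (r - r ^ 3)) ^ 2)) := by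
  set t := lam / 8 with htdef
  have ht0 : 0 ≤ t := by rw [htdef]; linarith
  have hth : t < 1/2 := by rw [htdef]; linarith
  set g : ℕ → ℝ → ℝ := fun m r => (Nat.centralBinom m : ℝ)/4^m * (r + t*(r - r^3))^(2*m+1)
    with hg
  have hgc : ∀ m, Continuous (g m) := by intro m; rw [hg]; fun_prop
  have hgnn : ∀ m, ∀ r ∈ Set.Icc (0:ℝ) 1, 0 ≤ g m r := by
    intro m r hr
    have := f_nonneg ht0 hr.1 hr.2
    rw [hg]
    positivity
  have hIoo : ∀ m, IntegrableOn (g m) (Set.Ioo (0:ℝ) 1) volume := fun m =>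
    (intervalIntegrable_iff_integrableOn_Ioo_of_le zero_le_one).mp
      ((hgc m).intervalIntegrable 0 1)
  -- row sums
  have hrow : ∀ m, HasSum (fun p => bfun t m p) (∫ r in (0:ℝ)..1, g m r) := by
    intro m
    have h1 : HasSum (fun p => bfun t m p) (∑ p ∈ Finset.range (2*m+2), bfun t m p) :=
      hasSum_sum_of_ne_finset_zero (fun p hp => by
        rw [bfun, if_neg]
        simp only [Finset.mem_range] at hp
        omega)
    have h2 : (∫ r in (0:ℝ)..1, g m r) = ∑ p ∈ Finset.range (2*m+2), bfun t m p := by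
      rw [hg]
      simp only
      rw [intervalIntegral.integral_const_mul, int_f_pow, Finset.mul_sum]
      apply Finset.sum_congr rfl
      intro p hp
      rw [bfun, if_pos (by simp only [Finset.mem_range] at hp; omega)]
    rw [h2]
    exact h1
  -- bounds and summability
  have hInn : ∀ m, 0 ≤ ∫ r in (0:ℝ)..1, g m r := fun m =>
    intervalIntegral.integral_nonneg zero_le_one (fun r hr => hgnn m r hr)
  have hc2 : 0 < 1-2*t := by linarith
  have hIbound : ∀ m, (∫ r in (0:ℝ)..1, g m r)
      ≤ ((1+t)/(1-2*t)) * (1/(((m:ℝ)+1) * Real.sqrt ((m:ℝ)+1))) := by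
    intro m
    have hmono : (∫ r in (0:ℝ)..1, (r + t*(r - r^3))^(2*m+1))
        ≤ ∫ r in (0:ℝ)..1, (1+t) * (1-(1-2*t)*(1-r))^m := by
      apply intervalIntegral.integral_mono_on zero_le_one
        ((by fun_prop : Continuous fun r : ℝ => (r + t*(r-r^3))^(2*m+1)).intervalIntegrable 0 1)
        ((by fun_prop : Continuous fun r : ℝ => (1+t) * (1-(1-2*t)*(1-r))^m).intervalIntegrable 0 1)
      intro r hr
      exact pow_f_le ht0 hth hr.1 hr.2 m
    have hw : (∫ r in (0:ℝ)..1, (1+t) * (1-(1-2*t)*(1-r))^m)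
        = (1+t) * ∫ r in (0:ℝ)..1, (1-(1-2*t)*(1-r))^m := intervalIntegral.integral_const_mul _ _
    have hwb := int_w_pow hc2 (by linarith) m
    have hfb : (∫ r in (0:ℝ)..1, (r + t*(r - r^3))^(2*m+1)) ≤ (1+t) * (1/((1-2*t)*((m:ℝ)+1))) := by
      rw [hw] at hmono
      calc (∫ r in (0:ℝ)..1, (r + t*(r - r^3))^(2*m+1))
          ≤ (1+t) * ∫ r in (0:ℝ)..1, (1-(1-2*t)*(1-r))^m := hmono
        _ ≤ (1+t) * (1/((1-2*t)*((m:ℝ)+1))) :=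
            mul_le_mul_of_nonneg_left hwb (by linarith)
    have hfnn : 0 ≤ (∫ r in (0:ℝ)..1, (r + t*(r - r^3))^(2*m+1)) :=
      intervalIntegral.integral_nonneg zero_le_one (fun r hr =>
        pow_nonneg (f_nonneg ht0 hr.1 hr.2) _)
    have ha := a_le_inv_sqrt m
    have hann : (0:ℝ) ≤ (Nat.centralBinom m : ℝ)/4^m := by positivity
    have hse : (0:ℝ) < Real.sqrt ((m:ℝ)+1) := Real.sqrt_pos.mpr (by positivity)
    calc (∫ r in (0:ℝ)..1, g m r)
        = (Nat.centralBinom m : ℝ)/4^m * (∫ r in (0:ℝ)..1, (r + t*(r - r^3))^(2*m+1)) := by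
          rw [hg]; simp only; rw [intervalIntegral.integral_const_mul]
      _ ≤ (1/Real.sqrt ((m:ℝ)+1)) * ((1+t) * (1/((1-2*t)*((m:ℝ)+1)))) := by
          apply mul_le_mul ha hfb hfnn (by positivity)
      _ = ((1+t)/(1-2*t)) * (1/(((m:ℝ)+1) * Real.sqrt ((m:ℝ)+1))) := by
          have h1 : Real.sqrt ((m:ℝ)+1) ≠ 0 := ne_of_gt hse
          have h2 : (1-2*t) ≠ 0 := ne_of_gt hc2
          have h3 : ((m:ℝ)+1) ≠ 0 := by positivity
          field_simp
  have hsummableI : Summable (fun m => ∫ r in (0:ℝ)..1, g m r) :=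
    Summable.of_nonneg_of_le hInn hIbound (summable_bound.mul_left _)
  -- interchange sum and integral
  have hnormval : ∀ m, (∫ r in Set.Ioo (0:ℝ) 1, ‖g m r‖) = ∫ r in (0:ℝ)..1, g m r := by
    intro m
    rw [intervalIntegral.integral_of_le zero_le_one, integral_Ioc_eq_integral_Ioo]
    apply setIntegral_congr_fun measurableSet_Ioo
    intro r hr
    exact Real.norm_of_nonneg (hgnn m r ⟨hr.1.le, hr.2.le⟩)
  have hkey := MeasureTheory.integral_tsum_of_summable_integral_norm (F := g)
    (μ := volume.restrict (Set.Ioo (0:ℝ) 1)) hIoo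
    (by exact hsummableI.congr (fun m => (hnormval m).symm))
  have hptw : (∫ r in Set.Ioo (0:ℝ) 1, ∑' m, g m r)
      = ∫ r in Set.Ioo (0:ℝ) 1, (r + t*(r - r^3)) / Real.sqrt (1 - (r + t*(r - r^3))^2) := by
    apply setIntegral_congr_fun measurableSet_Ioo
    intro r hr
    exact (hasSum_pointwise ht0 hth hr.1.le hr.2).tsum_eq
  have hIoo_int : ∀ m, (∫ r in Set.Ioo (0:ℝ) 1, g m r) = ∫ r in (0:ℝ)..1, g m r := by
    intro m
    rw [intervalIntegral.integral_of_le zero_le_one, integral_Ioc_eq_integral_Ioo]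
  have hintval : (∫ r in (0:ℝ)..1,
      (r + t*(r - r^3)) / Real.sqrt (1 - (r + t*(r - r^3))^2))
      = ∑' m, ∫ r in (0:ℝ)..1, g m r := by
    rw [intervalIntegral.integral_of_le zero_le_one, integral_Ioc_eq_integral_Ioo, ← hptw,
      ← hkey]
    exact tsum_congr (fun m => hIoo_int m)
  -- double sum rearrangement
  set bb : ℕ × ℕ → ℝ := fun q => bfun t q.1 q.2 with hbbdef
  have hbb : Summable bb := by
    apply (summable_prod_of_nonneg (fun q => bfun_nonneg ht0 q.1 q.2)).mpr
    exact ⟨fun m => (hrow m).summable,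
      hsummableI.congr (fun m => ((hrow m).tsum_eq).symm)⟩
  have htsum1 : ∑' q, bb q = ∑' m, ∫ r in (0:ℝ)..1, g m r := by
    rw [Summable.tsum_prod hbb]
    exact tsum_congr (fun m => (hrow m).tsum_eq)
  have hswap : Summable (fun q : ℕ × ℕ => bb q.swap) := hbb.prod_symm
  have hcol := (summable_prod_of_nonneg (f := fun q : ℕ × ℕ => bb q.swap)
    (fun q => bfun_nonneg ht0 q.2 q.1)).mp hswap
  have he1 : (∑' q : ℕ × ℕ, bb q.swap) = ∑' q, bb q := by
    simpa using (Equiv.prodComm ℕ ℕ).tsum_eq bb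
  have htsum2 : ∑' p, ∑' m, bfun t m p = ∑' q, bb q := by
    rw [← he1, Summable.tsum_prod hswap]
    rfl
  have hfinal : HasSum (fun p => ∑' m, bfun t m p) (∑' m, ∫ r in (0:ℝ)..1, g m r) := by
    have h := hcol.2.hasSum
    rw [show (∑' p, ∑' m, bb (p, m).swap) = ∑' m, ∫ r in (0:ℝ)..1, g m r from by
      rw [show (∑' p, ∑' m, bb (p, m).swap) = ∑' p, ∑' m, bfun t m p from rfl, htsum2, htsum1]]
      at h
    exact h
  have H2 := hfinal.mul_left 2
  -- coefficient identification
  have hCp : ∀ p, C p * lam ^ p = 2 * ∑' m, bfun t m p := by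
    intro p
    have hm1 : p ≤ 2*(m₀ p)+1 := (hm₀ p).1
    have hreindex : ∑' m, bfun t m p = ∑' k, bfun t (m₀ p + k) p := by
      refine (Function.Injective.tsum_eq (add_right_injective (m₀ p)) ?_).symm
      intro m hm'
      rw [Function.mem_support] at hm'
      have hple : p ≤ 2*m+1 := by
        by_contra h
        exact hm' (by simp only [bfun, if_neg h])
      have hle := (hm₀ p).2 hple
      exact ⟨m - m₀ p, by show m₀ p + (m - m₀ p) = m; omega⟩
    have h1 : (∑' k, 2 * bfun t (m₀ p + k) p)
        = ∑' k, ((1/Real.sqrt π)*(1/(8:ℝ)^p)) * (Real.Gamma (((m₀ p + k : ℕ):ℝ)+1/2)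
          * Real.Gamma (2*((m₀ p + k : ℕ):ℝ)+2)
          / (Real.Gamma (2*((m₀ p + k : ℕ):ℝ)+2-(p:ℝ)) * Real.Gamma (((m₀ p + k : ℕ):ℝ)+(p:ℝ)+2))
          * lam^p) := tsum_congr (fun k => by
            rw [htdef]
            exact coeff_eq p (m₀ p + k) (by omega))
    calc C p * lam ^ p
        = ((1/Real.sqrt π)*(1/(8:ℝ)^p)) * ((∑' k, Real.Gamma (((m₀ p + k : ℕ):ℝ)+1/2)
            * Real.Gamma (2*((m₀ p + k : ℕ):ℝ)+2)
            / (Real.Gamma (2*((m₀ p + k : ℕ):ℝ)+2-(p:ℝ))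
              * Real.Gamma (((m₀ p + k : ℕ):ℝ)+(p:ℝ)+2))) * lam^p) := by
          rw [hC p]; ring
      _ = ((1/Real.sqrt π)*(1/(8:ℝ)^p)) * (∑' k, (Real.Gamma (((m₀ p + k : ℕ):ℝ)+1/2)
            * Real.Gamma (2*((m₀ p + k : ℕ):ℝ)+2)
            / (Real.Gamma (2*((m₀ p + k : ℕ):ℝ)+2-(p:ℝ))
              * Real.Gamma (((m₀ p + k : ℕ):ℝ)+(p:ℝ)+2)) * lam^p)) := by
          rw [tsum_mul_right]
      _ = ∑' k, ((1/Real.sqrt π)*(1/(8:ℝ)^p)) * (Real.Gamma (((m₀ p + k : ℕ):ℝ)+1/2)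
            * Real.Gamma (2*((m₀ p + k : ℕ):ℝ)+2)
            / (Real.Gamma (2*((m₀ p + k : ℕ):ℝ)+2-(p:ℝ))
              * Real.Gamma (((m₀ p + k : ℕ):ℝ)+(p:ℝ)+2)) * lam^p) := by
          rw [tsum_mul_left]
      _ = ∑' k, 2 * bfun t (m₀ p + k) p := h1.symm
      _ = 2 * ∑' k, bfun t (m₀ p + k) p := by rw [tsum_mul_left]
      _ = 2 * ∑' m, bfun t m p := by rw [hreindex]
  rw [show (fun p : ℕ => C p * lam ^ p) = fun p => 2 * ∑' m, bfun t m p from funext hCp,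
    hintval]
  exact H2

/-- Exact power-series solution for the spinning-bubble axial length:
`2∫₀¹ f/√(1-f²) dr = Σ_p C_p λ^p` for `0 ≤ λ < 4`, with `f = r + (λ/8)(r - r³)` and
`C_p = (1/√π) 8^{-p} Σ_{m ≥ m₀(p)} Γ(m+1/2) Γ(2m+2)/(Γ(2m+2-p) Γ(m+p+2))`,
where `m₀(p)` is the least `m` with `2m+1 ≥ p`; in particular `C₀ = 2`. -/
theorem stmt_16 (m₀ : ℕ → ℕ)
    (hm₀ : ∀ p : ℕ, IsLeast {m : ℕ | p ≤ 2 * m + 1} (m₀ p))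
    (C : ℕ → ℝ)
    (hC : ∀ p : ℕ, C p =
      (1 / Real.sqrt π) * (1 / (8:ℝ) ^ p) *
        ∑' k : ℕ,
          Real.Gamma (((m₀ p + k : ℕ) : ℝ) + 1 / 2)
            * Real.Gamma (2 * ((m₀ p + k : ℕ) : ℝ) + 2)
            / (Real.Gamma (2 * ((m₀ p + k : ℕ) : ℝ) + 2 - (p : ℝ))
              * Real.Gamma (((m₀ p + k : ℕ) : ℝ) + (p : ℝ) + 2))) :
    (∀ lam : ℝ, 0 ≤ lam → lam < 4 →
      HasSum (fun p : ℕ => C p * lam ^ p)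
        (2 * ∫ r in (0:ℝ)..1,
          (r + lam / 8 * (r - r ^ 3)) /
            Real.sqrt (1 - (r + lam / 8 * (r - r ^ 3)) ^ 2))) ∧
    C 0 = 2 := by
  constructor
  · intro lam hl0 hl4
    exact main_part1 m₀ hm₀ C hC lam hl0 hl4
  · have HS := main_part1 m₀ hm₀ C hC 0 le_rfl (by norm_num)
    norm_num at HS
    rw [arc_integral] at HS
    norm_num at HS
    have h0 : HasSum (fun p : ℕ => C p * 0 ^ p) (C 0 * 0 ^ 0) :=
      hasSum_single 0 (fun p hp => by rw [zero_pow hp, mul_zero])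
    have := h0.unique (by simpa using HS)
    simpa using this
end
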